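/- arXiv:2308.06670 — 5 statements merged into one kernel-verified Lean document; each statement's English description precedes it below -/
import Mathlib

section
/- Let G be a simple graph in the class G_{m,n}. If G has at least one cut-vertex, then G is traceable, i.e., G contains a Hamiltonian path. -/
open SimpleGraph Finset

set_option linter.unusedSectionVars false
set_option linter.unusedVariables false
set_option maxHeartbeats 1000000

/-- The disjoint union of cliques `K_m ⊔ K_n`. -/
def cliqueSum (m n : ℕ) : SimpleGraph (Fin m ⊕ Fin n) :=
  (⊤ : SimpleGraph (Fin m)) ⊕g (⊤ : SimpleGraph (Fin n))

/-- The degree multiset of a finite simple graph. -/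
def degreeMultiset {V : Type} [Fintype V] [DecidableEq V] (G : SimpleGraph V) [DecidableRel G.Adj] :
    Multiset ℕ :=
  Finset.univ.val.map fun v => G.degree v

/-- Membership in the class `G_{m,n}`: a graph on `m + n` vertices whose degree multiset
equals that of `K_m ⊔ K_n` and which is not isomorphic to `K_m ⊔ K_n`. -/
def MemGmn (m n : ℕ) {V : Type} [Fintype V] [DecidableEq V] (G : SimpleGraph V) [DecidableRel G.Adj] : Prop :=
  Fintype.card V = m + n ∧
  degreeMultiset G = Multiset.replicate m (m - 1) + Multiset.replicate n (n - 1) ∧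
  IsEmpty (G ≃g cliqueSum m n)

/-- A cut-vertex: a vertex whose removal increases the number of connected components. -/
def IsCutVertex {V : Type} [Fintype V] [DecidableEq V] (G : SimpleGraph V) (v : V) : Prop :=
  Nat.card G.ConnectedComponent < Nat.card (G.induce ({v}ᶜ : Set V)).ConnectedComponent

section Main
variable {V : Type} [Fintype V] [DecidableEq V] {G : SimpleGraph V} [DecidableRel G.Adj]

def Avoid (G : SimpleGraph V) (v x y : V) : Prop := ∃ p : G.Walk x y, v ∉ p.support

lemma avoid_ne_left {v x y : V} (h : Avoid G v x y) : x ≠ v := by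
  obtain ⟨p, hp⟩ := h
  exact fun hx => hp (hx ▸ p.start_mem_support)

lemma avoid_ne_right {v x y : V} (h : Avoid G v x y) : y ≠ v := by
  obtain ⟨p, hp⟩ := h
  exact fun hx => hp (hx ▸ p.end_mem_support)

lemma avoid_refl {v x : V} (h : x ≠ v) : Avoid G v x x :=
  ⟨Walk.nil, by simpa using (Ne.symm h)⟩

lemma avoid_symm {v x y : V} (h : Avoid G v x y) : Avoid G v y x := by
  obtain ⟨p, hp⟩ := h
  exact ⟨p.reverse, by simpa using hp⟩

lemma avoid_trans {v x y z : V} (h : Avoid G v x y) (h' : Avoid G v y z) : Avoid G v x z := by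
  obtain ⟨p, hp⟩ := h
  obtain ⟨q, hq⟩ := h'
  refine ⟨p.append q, ?_⟩
  rw [SimpleGraph.Walk.mem_support_append_iff]
  tauto

lemma avoid_step {v a x y : V} (h : Avoid G v a x) (hxy : G.Adj x y) (hy : y ≠ v) :
    Avoid G v a y := by
  refine avoid_trans h ⟨hxy.toWalk, ?_⟩
  simp only [Walk.support_cons, Walk.support_nil, List.mem_cons, List.mem_singleton]
  push_neg
  exact ⟨(avoid_ne_right h).symm, Ne.symm hy, by simp⟩

lemma avoid_exit {v a x y : V} (p : G.Walk x y) (hx : Avoid G v a x) (hy : ¬ Avoid G v a y) :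
    ∃ t, Avoid G v a t ∧ G.Adj v t := by
  induction p with
  | nil => exact absurd hx hy
  | cons hadj p ih =>
    rename_i x' z y'
    by_cases hz : z = v
    · exact ⟨x', hx, by rw [← hz]; exact hadj.symm⟩
    · exact ih (avoid_step hx hadj hz) hy

lemma avoid_to_induce {v : V} {x y : V} (p : G.Walk x y) (hp : v ∉ p.support)
    (hx : x ∈ ({v}ᶜ : Set V)) (hy : y ∈ ({v}ᶜ : Set V)) :
    (G.induce ({v}ᶜ : Set V)).Reachable ⟨x, hx⟩ ⟨y, hy⟩ := by
  induction p with
  | nil => rfl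
  | cons hadj p ih =>
    rename_i x' z y'
    have hz : z ∈ ({v}ᶜ : Set V) := by
      simp only [Walk.support_cons, List.mem_cons] at hp
      simp only [Set.mem_compl_iff, Set.mem_singleton_iff]
      exact fun h => hp (Or.inr (h ▸ p.start_mem_support))
    have step : (G.induce ({v}ᶜ : Set V)).Adj ⟨x', hx⟩ ⟨z, hz⟩ := by
      simpa using hadj
    have hp' : v ∉ p.support := fun h => hp (by simp [Walk.support_cons, h])
    exact (step.reachable).trans (ih hp' hz hy)

lemma cut_sep {v : V} (h : IsCutVertex G v) :
    ∃ a b : V, a ≠ v ∧ b ≠ v ∧ G.Reachable a b ∧ ¬ Avoid G v a b := by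
  classical
  have hlt : Nat.card G.ConnectedComponent <
      Nat.card (G.induce ({v}ᶜ : Set V)).ConnectedComponent := h
  let f : (G.induce ({v}ᶜ : Set V)) →g G := ⟨Subtype.val, fun {p q} h => h⟩
  by_cases hinj : Function.Injective (SimpleGraph.ConnectedComponent.map f)
  · exact absurd (Nat.card_le_card_of_injective _ hinj) (by omega)
  · rw [Function.not_injective_iff] at hinj
    obtain ⟨c1, c2, hfc, hne⟩ := hinj
    obtain ⟨a', ha'⟩ := c1.exists_rep
    obtain ⟨b', hb'⟩ := c2.exists_rep
    refine ⟨a', b', fun h => a'.2 (by simp [h]), fun h => b'.2 (by simp [h]), ?_, ?_⟩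
    · have h1 : (c1.map f) = G.connectedComponentMk a' := by rw [← ha']; rfl
      have h2 : (c2.map f) = G.connectedComponentMk b' := by rw [← hb']; rfl
      exact (SimpleGraph.ConnectedComponent.eq).mp (by rw [← h1, ← h2, hfc])
    · intro hav
      obtain ⟨p, hp⟩ := hav
      have hr := avoid_to_induce p hp a'.2 b'.2
      refine hne ?_
      rw [← ha', ← hb']
      exact SimpleGraph.ConnectedComponent.eq.mpr (by convert hr)


lemma walk_of_chain : ∀ (l : List V), l ≠ [] → l.Chain' G.Adj →
    ∃ (u w : V) (p : G.Walk u w), p.support = l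
  | [], h, _ => absurd rfl h
  | [x], _, _ => ⟨x, x, Walk.nil, rfl⟩
  | x :: y :: t, _, hc => by
    obtain ⟨hadj, hc'⟩ := List.isChain_cons_cons.mp hc
    obtain ⟨u, w, p, hp⟩ := walk_of_chain (y :: t) (by simp) hc'
    have hu : u = y := by
      have := p.support_eq_cons
      rw [hp] at this
      exact (List.cons.injEq _ _ _ _ ▸ this).1.symm
    subst hu
    exact ⟨x, w, Walk.cons hadj p, by simp [hp]⟩

lemma ham_of_list (l : List V) (hnd : l.Nodup) (hcov : ∀ x : V, x ∈ l)
    (hch : l.Chain' G.Adj) (hne : l ≠ []) :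
    ∃ (u w : V) (p : G.Walk u w), p.IsHamiltonian := by
  obtain ⟨u, w, p, hp⟩ := walk_of_chain l hne hch
  exact ⟨u, w, p, fun x => by rw [hp]; exact List.count_eq_one_of_mem hnd (hcov x)⟩

lemma chain_of_clique {s : Finset V} (hs : ∀ x ∈ s, ∀ y ∈ s, x ≠ y → G.Adj x y) :
    ∀ (l : List V), l.Nodup → (∀ x ∈ l, x ∈ s) → l.Chain' G.Adj := by
  intro l hnd hmem
  have hp : l.Pairwise G.Adj := by
    induction l with
    | nil => exact List.Pairwise.nil
    | cons a t ih =>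
      rw [List.pairwise_cons]
      rw [List.nodup_cons] at hnd
      constructor
      · intro b hb
        exact hs a (hmem a (by simp)) b (hmem b (by simp [hb]))
          (fun h => hnd.1 (h ▸ hb))
      · exact ih hnd.2 (fun x hx => hmem x (by simp [hx]))
  exact hp.isChain

/-- A region: `v ∉ S` and `S` is closed under adjacency avoiding `v`. -/
def IsRegion (G : SimpleGraph V) (v : V) (S : Finset V) : Prop :=
  v ∉ S ∧ ∀ u ∈ S, ∀ y, G.Adj u y → y ≠ v → y ∈ S

lemma IsRegion.nbhd (hS : IsRegion G v S) (hu : u ∈ S) :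
    G.neighborFinset u ⊆ (insert v S).erase u := by
  intro y hy
  rw [mem_neighborFinset] at hy
  rw [mem_erase, mem_insert]
  refine ⟨hy.ne', ?_⟩
  by_cases hyv : y = v
  · exact Or.inl hyv
  · exact Or.inr (hS.2 u hu y hy hyv)

lemma IsRegion.card_target (hS : IsRegion G v S) (hu : u ∈ S) :
    ((insert v S).erase u).card = S.card := by
  rw [card_erase_of_mem (mem_insert_of_mem hu), card_insert_of_notMem hS.1]
  simp

lemma IsRegion.deg_le (hS : IsRegion G v S) (hu : u ∈ S) : G.degree u ≤ S.card := by
  rw [← G.card_neighborFinset_eq_degree, ← hS.card_target hu]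
  exact card_le_card (hS.nbhd hu)

lemma IsRegion.tight (hS : IsRegion G v S) (hu : u ∈ S) (hd : G.degree u = S.card) :
    G.neighborFinset u = (insert v S).erase u := by
  refine eq_of_subset_of_card_le (hS.nbhd hu) ?_
  rw [hS.card_target hu, ← hd, G.card_neighborFinset_eq_degree]

lemma IsRegion.tight_adj_v (hS : IsRegion G v S) (hu : u ∈ S) (hd : G.degree u = S.card) :
    G.Adj u v := by
  have := hS.tight hu hd
  rw [← mem_neighborFinset, this, mem_erase, mem_insert]
  exact ⟨fun h => hS.1 (h ▸ hu), Or.inl rfl⟩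

lemma IsRegion.tight_adj (hS : IsRegion G v S) (hu : u ∈ S) (hd : G.degree u = S.card)
    {u' : V} (hu' : u' ∈ S) (hne : u' ≠ u) : G.Adj u u' := by
  have := hS.tight hu hd
  rw [← mem_neighborFinset, this, mem_erase, mem_insert]
  exact ⟨hne, Or.inr hu'⟩




noncomputable def aclass (G : SimpleGraph V) (v a : V) : Finset V :=
  @Finset.filter _ (fun u => Avoid G v a u) (Classical.decPred _) Finset.univ

lemma mem_aclass {v a u : V} : u ∈ aclass G v a ↔ Avoid G v a u := by
  simp [aclass, Finset.mem_filter]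

lemma aclass_region (v a : V) : IsRegion G v (aclass G v a) := by
  constructor
  · rw [mem_aclass]; exact fun h => (avoid_ne_right h) rfl
  · intro u hu y hadj hy
    rw [mem_aclass] at hu ⊢
    exact avoid_step hu hadj hy

lemma self_mem_aclass {v a : V} (h : a ≠ v) : a ∈ aclass G v a :=
  mem_aclass.mpr (avoid_refl h)

lemma aclass_disj {v a b : V} (h : ¬ Avoid G v a b) :
    Disjoint (aclass G v a) (aclass G v b) := by
  rw [Finset.disjoint_left]
  intro u hu hu'
  rw [mem_aclass] at hu hu'
  exact h (avoid_trans hu (avoid_symm hu'))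

lemma aclass_exit {v a b : V} (hreach : G.Reachable a b) (ha : a ≠ v)
    (hsep : ¬ Avoid G v a b) : ∃ t ∈ aclass G v a, G.Adj v t := by
  obtain ⟨p⟩ := hreach
  obtain ⟨t, ht, hadj⟩ := avoid_exit p (avoid_refl ha) hsep
  exact ⟨t, mem_aclass.mpr ht, hadj⟩

noncomputable def rest (G : SimpleGraph V) (v a b : V) : Finset V :=
  Finset.univ \ (insert v (aclass G v a ∪ aclass G v b))

lemma mem_rest {v a b u : V} :
    u ∈ rest G v a b ↔ ¬(u = v) ∧ u ∉ aclass G v a ∧ u ∉ aclass G v b := by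
  simp only [rest, Finset.mem_sdiff, Finset.mem_univ, true_and, Finset.mem_insert,
    Finset.mem_union]
  push_neg
  tauto

lemma rest_region (v a b : V) : IsRegion G v (rest G v a b) := by
  constructor
  · simp [rest]
  · intro u hu y hadj hy
    simp only [rest, Finset.mem_sdiff, Finset.mem_univ, true_and, Finset.mem_insert,
      Finset.mem_union] at hu ⊢
    push_neg at hu ⊢
    obtain ⟨huv, hua, hub⟩ := hu
    refine ⟨hy, ?_, ?_⟩
    · intro hya
      exact hua (((aclass_region v a).2 y hya u hadj.symm huv))
    · intro hyb
      exact hub (((aclass_region v b).2 y hyb u hadj.symm huv))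

lemma region_card_sum (v a b : V) (hsep : ¬ Avoid G v a b) :
    (aclass G v a).card + (aclass G v b).card + (rest G v a b).card + 1 = Fintype.card V := by
  have hd : Disjoint (aclass G v a) (aclass G v b) := aclass_disj hsep
  have hv : v ∉ aclass G v a ∪ aclass G v b := by
    simp only [Finset.mem_union]
    push_neg
    exact ⟨(aclass_region v a).1, (aclass_region v b).1⟩
  have h1 : (insert v (aclass G v a ∪ aclass G v b)).card
      = (aclass G v a).card + (aclass G v b).card + 1 := by
    rw [Finset.card_insert_of_notMem hv, Finset.card_union_of_disjoint hd]
  have h2 : (rest G v a b).card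
      = Fintype.card V - (insert v (aclass G v a ∪ aclass G v b)).card := by
    rw [rest, Finset.card_sdiff_of_subset (Finset.subset_univ _), Finset.card_univ]
  have h3 : (insert v (aclass G v a ∪ aclass G v b)).card ≤ Fintype.card V := by
    rw [← Finset.card_univ]
    exact Finset.card_le_card (Finset.subset_univ _)
  omega

lemma mem_parts {v a b u : V} (hsep : ¬ Avoid G v a b) :
    u = v ∨ u ∈ aclass G v a ∨ u ∈ aclass G v b ∨ u ∈ rest G v a b := by
  by_cases h1 : u = v
  · exact Or.inl h1
  by_cases h2 : u ∈ aclass G v a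
  · exact Or.inr (Or.inl h2)
  by_cases h3 : u ∈ aclass G v b
  · exact Or.inr (Or.inr (Or.inl h3))
  refine Or.inr (Or.inr (Or.inr ?_))
  simp only [rest, Finset.mem_sdiff, Finset.mem_univ, true_and, Finset.mem_insert,
    Finset.mem_union]
  push_neg
  exact ⟨h1, h2, h3⟩

variable [DecidableRel G.Adj]

lemma equal_deg_contra (c : ℕ) (hdegc : ∀ u, G.degree u = c)
    (hcard : Fintype.card V ≤ 2*c+2) (v a b : V) (ha : a ≠ v) (hb : b ≠ v)
    (hreach : G.Reachable a b) (hsep : ¬ Avoid G v a b) : False := by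
  have hba : ¬ Avoid G v b a := fun h => hsep (avoid_symm h)
  obtain ⟨ta, hta, htav⟩ := aclass_exit hreach ha hsep
  obtain ⟨tb, htb, htbv⟩ := aclass_exit hreach.symm hb hba
  have htbCa : tb ∉ aclass G v a := Finset.disjoint_right.mp (aclass_disj hsep) htb
  have htaCb : ta ∉ aclass G v b := Finset.disjoint_left.mp (aclass_disj hsep) hta
  have claim : ∀ (S : Finset V), IsRegion G v S → S.Nonempty →
      ∀ t', t' ∉ S → G.Adj v t' → c + 1 ≤ S.card := by
    intro S hS hSne t' ht' htv
    obtain ⟨x, hx⟩ := hSne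
    have h1 : c ≤ S.card := hdegc x ▸ hS.deg_le hx
    by_contra hlt
    have hSc : S.card = c := by omega
    have hsub : insert t' S ⊆ G.neighborFinset v := by
      intro y hy
      rw [mem_neighborFinset]
      rcases Finset.mem_insert.mp hy with h | h
      · exact h ▸ htv
      · exact (hS.tight_adj_v h (hSc ▸ hdegc y)).symm
    have := Finset.card_le_card hsub
    rw [Finset.card_insert_of_notMem ht', hSc, G.card_neighborFinset_eq_degree,
      hdegc v] at this
    omega
  have hCa := claim _ (aclass_region v a) ⟨a, self_mem_aclass ha⟩ tb htbCa htbv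
  have hCb := claim _ (aclass_region v b) ⟨b, self_mem_aclass hb⟩ ta htaCb htav
  have := region_card_sum v a b hsep
  omega

lemma vA_aux (μ ν : ℕ) (h1μ : 1 ≤ μ) (hμν : μ < ν) (hcard : Fintype.card V = μ + ν)
    (hdich : ∀ u, G.degree u = μ-1 ∨ G.degree u = ν-1)
    (hBcard : (Finset.univ.filter (fun u => G.degree u = ν-1)).card = ν)
    (v a b : V) (ha : a ≠ v) (hb : b ≠ v) (hreach : G.Reachable a b)
    (hsep : ¬ Avoid G v a b) (hdegv : G.degree v = μ-1)
    (hone : (∃ u ∈ aclass G v b, G.degree u = ν-1) → (∃ u ∈ aclass G v a, G.degree u = ν-1)) :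
    False := by
  classical
  have hvals : μ - 1 ≠ ν - 1 := by omega
  set Ca := aclass G v a with hCadef
  set Cb := aclass G v b with hCbdef
  set Rst := rest G v a b with hRdef
  have hreg_a : IsRegion G v Ca := aclass_region v a
  have hreg_b : IsRegion G v Cb := aclass_region v b
  have hreg_r : IsRegion G v Rst := rest_region v a b
  have hba : ¬ Avoid G v b a := fun h => hsep (avoid_symm h)
  have hdisj : Disjoint Ca Cb := aclass_disj hsep
  obtain ⟨ta, hta, htav⟩ := aclass_exit hreach ha hsep
  obtain ⟨tb, htb, htbv⟩ := aclass_exit hreach.symm hb hba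
  have hsum : Ca.card + Cb.card + Rst.card + 1 = Fintype.card V := region_card_sum v a b hsep
  rw [hcard] at hsum
  have hparts : ∀ u, u = v ∨ u ∈ Ca ∨ u ∈ Cb ∨ u ∈ Rst := fun u => mem_parts hsep
  have htaC : ta ∈ Ca := hta
  have htbC : tb ∈ Cb := htb
  have htatb : ta ≠ tb := fun h => (Finset.disjoint_left.mp hdisj hta) (h ▸ htb)
  -- v has at least two neighbors, so μ ≥ 3
  have hμ3 : 3 ≤ μ := by
    have hsub : insert ta {tb} ⊆ G.neighborFinset v := by
      intro y hy
      rw [mem_neighborFinset]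
      rcases Finset.mem_insert.mp hy with h | h
      · exact h ▸ htav
      · exact (Finset.mem_singleton.mp h) ▸ htbv
    have h2 := Finset.card_le_card hsub
    rw [Finset.card_insert_of_notMem (by simpa using htatb), Finset.card_singleton,
      G.card_neighborFinset_eq_degree, hdegv] at h2
    omega
  set B := Finset.univ.filter (fun u => G.degree u = ν-1) with hBdef
  have hmemB : ∀ u, u ∈ B ↔ G.degree u = ν-1 := by
    intro u; simp [hBdef]
  have hvB : v ∉ B := by rw [hmemB]; omega
  -- A vertices
  have hnotB : ∀ u, u ∉ B → G.degree u = μ-1 := by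
    intro u hu
    rcases hdich u with h | h
    · exact h
    · exact absurd ((hmemB u).mpr h) hu
  by_cases hBa : ∃ u ∈ Ca, G.degree u = ν-1
  · obtain ⟨ua, hua, hdua⟩ := hBa
    have hCage : ν - 1 ≤ Ca.card := hdua ▸ hreg_a.deg_le hua
    by_cases hBb : ∃ u ∈ Cb, G.degree u = ν-1
    · -- both sides contain big-degree vertices
      obtain ⟨ub, hub, hdub⟩ := hBb
      have hCbge : ν - 1 ≤ Cb.card := hdub ▸ hreg_b.deg_le hub
      have hfacts : Ca.card = ν-1 ∧ Cb.card = ν-1 ∧ Rst.card = 0 := by omega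
      have hRempty : Rst = ∅ := Finset.card_eq_zero.mp hfacts.2.2
      -- every big-degree vertex is adjacent to v
      have hBN : B ⊆ G.neighborFinset v := by
        intro u hu
        have hdu := (hmemB u).mp hu
        have huv : u ≠ v := fun h => hvB (h ▸ hu)
        rw [mem_neighborFinset]
        rcases hparts u with h | h | h | h
        · exact absurd h huv
        · exact (hreg_a.tight_adj_v h (by rw [hdu, hfacts.1])).symm
        · exact (hreg_b.tight_adj_v h (by rw [hdu, hfacts.2.1])).symm
        · rw [hRempty] at h; simp at h
      have := Finset.card_le_card hBN
      rw [G.card_neighborFinset_eq_degree, hdegv, hBcard] at this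
      omega
    · -- Cb is all small-degree
      push_neg at hBb
      -- Cb ⊆ A \ {v}, so Cb.card ≤ μ - 1 ; also Cb.card ≥ μ - 1
      have hCbA : ∀ u ∈ Cb, G.degree u = μ - 1 := by
        intro u hu
        exact hnotB u (fun hB => hBb u hu ((hmemB u).mp hB))
      have hCble : Cb.card ≤ μ - 1 := by
        have hsub : Cb ⊆ (Finset.univ \ B).erase v := by
          intro u hu
          rw [Finset.mem_erase, Finset.mem_sdiff]
          exact ⟨fun h => hreg_b.1 (h ▸ hu), Finset.mem_univ u,
            fun hB => hvals ((hCbA u hu) ▸ ((hmemB u).mp hB).symm ▸ rfl)⟩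
        have h1 := Finset.card_le_card hsub
        have h2 : (Finset.univ \ B).card = μ := by
          rw [Finset.card_sdiff_of_subset (Finset.subset_univ _), Finset.card_univ, hcard, hBcard]
          omega
        rw [Finset.card_erase_of_mem, h2] at h1
        · exact h1
        · rw [Finset.mem_sdiff]; exact ⟨Finset.mem_univ v, hvB⟩
      have hCbge : μ - 1 ≤ Cb.card := (hCbA b (self_mem_aclass hb)) ▸ hreg_b.deg_le (self_mem_aclass hb)
      have hCbcard : Cb.card = μ - 1 := by omega
      -- all of Cb adjacent to v, plus ta
      have hsub : insert ta Cb ⊆ G.neighborFinset v := by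
        intro y hy
        rw [mem_neighborFinset]
        rcases Finset.mem_insert.mp hy with h | h
        · exact h ▸ htav
        · exact (hreg_b.tight_adj_v h (by rw [hCbA y h, hCbcard])).symm
      have h3 := Finset.card_le_card hsub
      rw [Finset.card_insert_of_notMem (Finset.disjoint_left.mp hdisj hta),
        G.card_neighborFinset_eq_degree, hdegv, hCbcard] at h3
      omega
  · -- Ca all small; then also Cb all small by hone
    have hBb : ¬ (∃ u ∈ Cb, G.degree u = ν-1) := fun h => hBa (hone h)
    push_neg at hBa hBb
    have hCaA : G.degree a = μ - 1 :=
      hnotB a (fun hB => hBa a (self_mem_aclass ha) ((hmemB a).mp hB))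
    have hCbA : G.degree b = μ - 1 :=
      hnotB b (fun hB => hBb b (self_mem_aclass hb) ((hmemB b).mp hB))
    have hCage : μ - 1 ≤ Ca.card := hCaA ▸ hreg_a.deg_le (self_mem_aclass ha)
    have hCbge : μ - 1 ≤ Cb.card := hCbA ▸ hreg_b.deg_le (self_mem_aclass hb)
    -- Ca ∪ Cb ⊆ A \ {v}
    have hsub : Ca ∪ Cb ⊆ (Finset.univ \ B).erase v := by
      intro u hu
      rw [Finset.mem_erase, Finset.mem_sdiff]
      rcases Finset.mem_union.mp hu with h | h
      · exact ⟨fun he => hreg_a.1 (he ▸ h), Finset.mem_univ u,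
          fun hB => hBa u h ((hmemB u).mp hB)⟩
      · exact ⟨fun he => hreg_b.1 (he ▸ h), Finset.mem_univ u,
          fun hB => hBb u h ((hmemB u).mp hB)⟩
    have h1 := Finset.card_le_card hsub
    rw [Finset.card_union_of_disjoint hdisj, Finset.card_erase_of_mem
      (by rw [Finset.mem_sdiff]; exact ⟨Finset.mem_univ v, hvB⟩)] at h1
    have h2 : (Finset.univ \ B).card = μ := by
      rw [Finset.card_sdiff_of_subset (Finset.subset_univ _), Finset.card_univ, hcard, hBcard]
      omega
    rw [h2] at h1
    omega

lemma famII (μ ν : ℕ) (h1μ : 1 ≤ μ) (hμν : μ < ν) (hcard : Fintype.card V = μ + ν)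
    (hdich : ∀ u, G.degree u = μ-1 ∨ G.degree u = ν-1)
    (hBcard : (Finset.univ.filter (fun u => G.degree u = ν-1)).card = ν)
    (v a b : V) (ha : a ≠ v) (hb : b ≠ v) (hreach : G.Reachable a b)
    (hsep : ¬ Avoid G v a b) (hdegv : G.degree v = ν-1)
    (u1 : V) (hu1 : u1 ∈ aclass G v a) (hdu1 : G.degree u1 = ν-1)
    (u2 : V) (hu2 : u2 ∈ aclass G v b) (hdu2 : G.degree u2 = ν-1) :
    ∃ (u w : V) (p : G.Walk u w), p.IsHamiltonian := by
  classical
  have hba : ¬ Avoid G v b a := fun h => hsep (avoid_symm h)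
  have hsum : (aclass G v a).card + (aclass G v b).card + (rest G v a b).card + 1
      = Fintype.card V := region_card_sum v a b hsep
  rw [hcard] at hsum
  set Ca := aclass G v a with hCadef
  set Cb := aclass G v b with hCbdef
  set Rst := rest G v a b with hRdef
  have hreg_a : IsRegion G v Ca := aclass_region v a
  have hreg_b : IsRegion G v Cb := aclass_region v b
  have hdisj : Disjoint Ca Cb := aclass_disj hsep
  have hparts : ∀ u, u = v ∨ u ∈ Ca ∨ u ∈ Cb ∨ u ∈ Rst := fun u => mem_parts hsep
  have hu1C : u1 ∈ Ca := hu1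
  have hu2C : u2 ∈ Cb := hu2
  set B := Finset.univ.filter (fun u => G.degree u = ν-1) with hBdef
  have hmemB : ∀ u, u ∈ B ↔ G.degree u = ν-1 := by intro u; simp [hBdef]
  have hvB : v ∈ B := (hmemB v).mpr hdegv
  have hCage : ν - 1 ≤ Ca.card := hdu1 ▸ hreg_a.deg_le hu1C
  have hCbge : ν - 1 ≤ Cb.card := hdu2 ▸ hreg_b.deg_le hu2C
  have hfacts : Ca.card = ν-1 ∧ Cb.card = ν-1 ∧ Rst.card = 0 ∧ μ = ν - 1 := by omega
  have hRempty : Rst = ∅ := Finset.card_eq_zero.mp hfacts.2.2.1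
  -- every big-degree vertex except v is adjacent to v
  have hBvN : B.erase v ⊆ G.neighborFinset v := by
    intro u hu
    obtain ⟨huv, huB⟩ := Finset.mem_erase.mp hu
    have hdu := (hmemB u).mp huB
    rw [mem_neighborFinset]
    rcases hparts u with h | h | h | h
    · exact absurd h huv
    · exact (hreg_a.tight_adj_v h (by rw [hdu, hfacts.1])).symm
    · exact (hreg_b.tight_adj_v h (by rw [hdu, hfacts.2.1])).symm
    · rw [hRempty] at h; simp at h
  have hNv : B.erase v = G.neighborFinset v := by
    refine Finset.eq_of_subset_of_card_le hBvN ?_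
    rw [G.card_neighborFinset_eq_degree, hdegv, Finset.card_erase_of_mem hvB, hBcard]
  -- each side is a clique
  have hclique : ∀ (S : Finset V), IsRegion G v S → S.card = ν - 1 →
      ∀ x ∈ S, ∀ y ∈ S, x ≠ y → G.Adj x y := by
    intro S hS hScard x hx y hy hxy
    by_cases hxB : x ∈ B
    · exact hS.tight_adj hx (by rw [(hmemB x).mp hxB, hScard]) hy (Ne.symm hxy)
    · -- x has small degree and is not adjacent to v
      have hdx : G.degree x = μ - 1 := by
        rcases hdich x with h | h
        · exact h
        · exact absurd ((hmemB x).mpr h) hxB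
      have hxv : ¬ G.Adj x v := by
        intro hadj
        have hmem : x ∈ G.neighborFinset v := by rw [mem_neighborFinset]; exact hadj.symm
        rw [← hNv, Finset.mem_erase] at hmem
        exact hxB hmem.2
      have hsub : G.neighborFinset x ⊆ S.erase x := by
        intro z hz
        have h1 := hS.nbhd hx hz
        rw [Finset.mem_erase, Finset.mem_insert] at h1
        rcases h1.2 with h | h
        · rw [mem_neighborFinset] at hz
          exact absurd (h ▸ hz) hxv
        · exact Finset.mem_erase.mpr ⟨h1.1, h⟩
      have hEq : G.neighborFinset x = S.erase x := by
        refine Finset.eq_of_subset_of_card_le hsub ?_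
        rw [G.card_neighborFinset_eq_degree, hdx, Finset.card_erase_of_mem hx, hScard]
        omega
      rw [← mem_neighborFinset, hEq, Finset.mem_erase]
      exact ⟨Ne.symm hxy, hy⟩
  have hcliqa := hclique Ca hreg_a hfacts.1
  have hcliqb := hclique Cb hreg_b hfacts.2.1
  have hvu1 : G.Adj v u1 := by
    rw [← mem_neighborFinset, ← hNv, Finset.mem_erase]
    exact ⟨fun h => hreg_a.1 (h ▸ hu1C), (hmemB u1).mpr hdu1⟩
  have hvu2 : G.Adj v u2 := by
    rw [← mem_neighborFinset, ← hNv, Finset.mem_erase]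
    exact ⟨fun h => hreg_b.1 (h ▸ hu2C), (hmemB u2).mpr hdu2⟩
  -- build the Hamiltonian list
  set l1 : List V := (Ca.erase u1).toList with hl1
  set l2 : List V := (Cb.erase u2).toList with hl2
  set l : List V := l1 ++ u1 :: v :: u2 :: l2 with hl
  have hml1 : ∀ x ∈ l1, x ∈ Ca.erase u1 := fun x hx => Finset.mem_toList.mp hx
  have hml2 : ∀ x ∈ l2, x ∈ Cb.erase u2 := fun x hx => Finset.mem_toList.mp hx
  refine ham_of_list l ?_ ?_ ?_ (by simp [hl])
  · -- Nodup
    rw [hl]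
    have h2 : u2 ∉ l2 := fun h => (Finset.mem_erase.mp (hml2 u2 h)).1 rfl
    have hnd2 : (u2 :: l2).Nodup := List.nodup_cons.mpr ⟨h2, Finset.nodup_toList _⟩
    have hv2 : v ∉ u2 :: l2 := by
      intro h
      rcases List.mem_cons.mp h with h | h
      · exact hreg_b.1 (h ▸ hu2C)
      · exact hreg_b.1 ((Finset.mem_erase.mp (hml2 v h)).2)
    have hndv : (v :: u2 :: l2).Nodup := List.nodup_cons.mpr ⟨hv2, hnd2⟩
    have hu1m : u1 ∉ v :: u2 :: l2 := by
      intro h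
      rcases List.mem_cons.mp h with h | h
      · exact hreg_a.1 (h ▸ hu1C)
      · have hm : u1 ∈ Cb := by
          rcases List.mem_cons.mp h with h' | h'
          · exact h' ▸ hu2C
          · exact (Finset.mem_erase.mp (hml2 u1 h')).2
        exact Finset.disjoint_left.mp hdisj hu1C hm
    refine List.Nodup.append (Finset.nodup_toList _) (List.nodup_cons.mpr ⟨hu1m, hndv⟩) ?_
    intro x hx hmem
    have hxe := Finset.mem_erase.mp (hml1 x hx)
    rcases List.mem_cons.mp hmem with h | h
    · exact hxe.1 h
    rcases List.mem_cons.mp h with h | h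
    · exact hreg_a.1 (h ▸ hxe.2)
    have hm : x ∈ Cb := by
      rcases List.mem_cons.mp h with h' | h'
      · exact h' ▸ hu2C
      · exact (Finset.mem_erase.mp (hml2 x h')).2
    exact Finset.disjoint_left.mp hdisj hxe.2 hm
  · -- coverage
    intro x
    rw [hl]
    simp only [List.mem_append, List.mem_cons]
    rcases hparts x with h | h | h | h
    · tauto
    · by_cases hx1 : x = u1
      · tauto
      · exact Or.inl (Finset.mem_toList.mpr (Finset.mem_erase.mpr ⟨hx1, h⟩))
    · by_cases hx2 : x = u2
      · tauto
      · have : x ∈ l2 := Finset.mem_toList.mpr (Finset.mem_erase.mpr ⟨hx2, h⟩)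
        tauto
    · rw [hRempty] at h; simp at h
  · -- chain
    rw [hl]
    refine List.isChain_append.mpr ⟨?_, ?_, ?_⟩
    · exact chain_of_clique hcliqa l1 (Finset.nodup_toList _)
        (fun x hx => (Finset.mem_erase.mp (hml1 x hx)).2)
    · rw [List.isChain_cons_cons, List.isChain_cons_cons]
      refine ⟨hvu1.symm, hvu2, ?_⟩
      exact chain_of_clique hcliqb (u2 :: l2) (by
          simp only [List.nodup_cons]
          exact ⟨fun h => (Finset.mem_erase.mp (hml2 u2 h)).1 rfl, Finset.nodup_toList _⟩)
        (fun x hx => by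
          rcases List.mem_cons.mp hx with h | h
          · exact h ▸ hu2C
          · exact (Finset.mem_erase.mp (hml2 x h)).2)
    · intro x hx y hy
      simp only [List.head?_cons, Option.mem_some_iff] at hy
      have hxl : x ∈ l1 := List.mem_of_mem_getLast? hx
      have hxe := Finset.mem_erase.mp (hml1 x hxl)
      exact hy ▸ hcliqa x hxe.2 u1 hu1C hxe.1

set_option maxHeartbeats 1000000 in
lemma famI (μ ν : ℕ) (h1μ : 1 ≤ μ) (hμν : μ < ν) (hcard : Fintype.card V = μ + ν)
    (hdich : ∀ u, G.degree u = μ-1 ∨ G.degree u = ν-1)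
    (hBcard : (Finset.univ.filter (fun u => G.degree u = ν-1)).card = ν)
    (v a b : V) (ha : a ≠ v) (hb : b ≠ v) (hreach : G.Reachable a b)
    (hsep : ¬ Avoid G v a b) (hdegv : G.degree v = ν-1)
    (u1 : V) (hu1 : u1 ∈ aclass G v a) (hdu1 : G.degree u1 = ν-1)
    (hBb : ∀ u ∈ aclass G v b, G.degree u ≠ ν-1) :
    ∃ (u w : V) (p : G.Walk u w), p.IsHamiltonian := by
  classical
  have hvals : μ - 1 ≠ ν - 1 := by omega
  have hba : ¬ Avoid G v b a := fun h => hsep (avoid_symm h)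
  have hsum : (aclass G v a).card + (aclass G v b).card + (rest G v a b).card + 1
      = Fintype.card V := region_card_sum v a b hsep
  rw [hcard] at hsum
  obtain ⟨tb, htb, htbv⟩ := aclass_exit hreach.symm hb hba
  set Ca := aclass G v a with hCadef
  set Cb := aclass G v b with hCbdef
  set Rst := rest G v a b with hRdef
  have hreg_a : IsRegion G v Ca := aclass_region v a
  have hreg_b : IsRegion G v Cb := aclass_region v b
  have hreg_r : IsRegion G v Rst := rest_region v a b
  have hdisj : Disjoint Ca Cb := aclass_disj hsep
  have hparts : ∀ u, u = v ∨ u ∈ Ca ∨ u ∈ Cb ∨ u ∈ Rst := fun u => mem_parts hsep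
  have hmemRst : ∀ u, u ∈ Rst ↔ ¬(u = v) ∧ u ∉ Ca ∧ u ∉ Cb := fun u => mem_rest
  have hu1C : u1 ∈ Ca := hu1
  have htbC : tb ∈ Cb := htb
  set B := Finset.univ.filter (fun u => G.degree u = ν-1) with hBdef
  have hmemB : ∀ u, u ∈ B ↔ G.degree u = ν-1 := by intro u; simp [hBdef]
  have hvB : v ∈ B := (hmemB v).mpr hdegv
  have hnotB : ∀ u, u ∉ B → G.degree u = μ-1 := by
    intro u hu
    rcases hdich u with h | h
    · exact h
    · exact absurd ((hmemB u).mpr h) hu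
  have hCbA : ∀ u ∈ Cb, G.degree u = μ-1 := by
    intro u hu
    rcases hdich u with h | h
    · exact h
    · exact absurd h (hBb u hu)
  -- μ ≥ 2 since tb has positive degree
  have hμ2 : 2 ≤ μ := by
    have h1 : ({v} : Finset V) ⊆ G.neighborFinset tb := by
      intro z hz
      rw [Finset.mem_singleton] at hz
      rw [mem_neighborFinset]
      exact hz ▸ htbv.symm
    have h2 := Finset.card_le_card h1
    rw [Finset.card_singleton, G.card_neighborFinset_eq_degree, hCbA tb htbC] at h2
    omega
  have hCage : ν - 1 ≤ Ca.card := hdu1 ▸ hreg_a.deg_le hu1C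
  have hCbge : μ - 1 ≤ Cb.card := (hCbA b (self_mem_aclass hb)) ▸ hreg_b.deg_le (self_mem_aclass hb)
  have hCbne : 1 ≤ Cb.card := Finset.card_pos.mpr ⟨b, self_mem_aclass hb⟩
  -- no big-degree vertex in Rst
  have hRA : ∀ u ∈ Rst, G.degree u = μ-1 := by
    intro u hu
    rcases hdich u with h | h
    · exact h
    · exfalso
      have hRge : ν - 1 ≤ Rst.card := h ▸ hreg_r.deg_le hu
      omega
  -- every big-degree vertex except v is in Ca
  have hBvCa : ∀ u, u ∈ B → u ≠ v → u ∈ Ca := by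
    intro u hu huv
    have hdu := (hmemB u).mp hu
    rcases hparts u with h | h | h | h
    · exact absurd h huv
    · exact h
    · exact absurd hdu (hBb u h)
    · exact absurd (hRA u h) (by rw [hdu]; omega)
  -- counting small-degree vertices
  set A := (Finset.univ \ B : Finset V) with hAdef
  have hmemA : ∀ u, u ∈ A ↔ G.degree u = μ-1 := by
    intro u
    rw [hAdef, Finset.mem_sdiff]
    constructor
    · exact fun h => hnotB u h.2
    · intro h
      refine ⟨Finset.mem_univ u, fun hB => hvals (h ▸ (hmemB u).mp hB ▸ rfl)⟩
  have hAcard : A.card = μ := by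
    rw [hAdef, Finset.card_sdiff_of_subset (Finset.subset_univ _), Finset.card_univ, hcard, hBcard]
    omega
  set X := A ∩ Ca with hXdef
  have hAsplit : A = X ∪ Cb ∪ (A ∩ Rst) := by
    ext u
    simp only [Finset.mem_union, hXdef, Finset.mem_inter]
    constructor
    · intro huA
      have huv : u ≠ v := fun h => (Finset.mem_sdiff.mp (hAdef ▸ huA)).2 (h ▸ hvB)
      rcases hparts u with h | h | h | h
      · exact absurd h huv
      · exact Or.inl (Or.inl ⟨huA, h⟩)
      · exact Or.inl (Or.inr h)
      · exact Or.inr ⟨huA, h⟩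
    · intro h
      rcases h with (⟨h, _⟩ | h) | ⟨h, _⟩
      · exact h
      · exact (hmemA u).mpr (hCbA u h)
      · exact h
  have hdisjXCb : Disjoint X Cb := by
    refine Finset.disjoint_left.mpr ?_
    intro u hu hu'
    exact Finset.disjoint_left.mp hdisj (Finset.mem_inter.mp hu).2 hu'
  have hdisjXR : Disjoint (X ∪ Cb) (A ∩ Rst) := by
    refine Finset.disjoint_left.mpr ?_
    intro u hu hu'
    have hR := (Finset.mem_inter.mp hu').2
    have := (hmemRst u).mp hR
    rcases Finset.mem_union.mp hu with h | h
    · exact this.2.1 (Finset.mem_inter.mp h).2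
    · exact this.2.2 h
  have hcount : μ = X.card + Cb.card + (A ∩ Rst).card := by
    have hc2 : A.card = (X ∪ Cb ∪ (A ∩ Rst)).card := by rw [← hAsplit]
    rw [Finset.card_union_of_disjoint hdisjXR, Finset.card_union_of_disjoint hdisjXCb] at hc2
    omega
  by_cases hX0 : X.card = 0
  · -- Ca = B.erase v, contradiction
    exfalso
    have hXe : X = ∅ := Finset.card_eq_zero.mp hX0
    have hCaB : ∀ u ∈ Ca, u ∈ B := by
      intro u hu
      by_contra huB
      have : u ∈ X := Finset.mem_inter.mpr ⟨(hmemA u).mpr (hnotB u huB), hu⟩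
      rw [hXe] at this
      simp at this
    have hCasub : Ca ⊆ B.erase v := by
      intro u hu
      exact Finset.mem_erase.mpr ⟨fun h => hreg_a.1 (h ▸ hu), hCaB u hu⟩
    have hCale : Ca.card ≤ ν - 1 := by
      have := Finset.card_le_card hCasub
      rwa [Finset.card_erase_of_mem hvB, hBcard] at this
    have hCacard : Ca.card = ν - 1 := by omega
    have hsub : insert tb Ca ⊆ G.neighborFinset v := by
      intro z hz
      rw [mem_neighborFinset]
      rcases Finset.mem_insert.mp hz with h | h
      · exact h ▸ htbv
      · exact (hreg_a.tight_adj_v h (by rw [(hmemB z).mp (hCaB z h), hCacard])).symm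
    have h3 := Finset.card_le_card hsub
    rw [Finset.card_insert_of_notMem (Finset.disjoint_right.mp hdisj htbC),
      G.card_neighborFinset_eq_degree, hdegv, hCacard] at h3
    omega
  · -- X = {x} : the family I structure
    have hX1 : X.card = 1 ∧ Rst.card = 0 ∧ Cb.card = μ - 1 := by
      have hARle : (A ∩ Rst).card = Rst.card ∨ (A ∩ Rst).card ≤ Rst.card :=
        Or.inr (Finset.card_le_card Finset.inter_subset_right)
      have hAR : A ∩ Rst = Rst := by
        refine Finset.inter_eq_right.mpr ?_
        intro u hu
        exact (hmemA u).mpr (hRA u hu)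
      rw [hAR] at hcount
      omega
    obtain ⟨x, hXx⟩ := Finset.card_eq_one.mp hX1.1
    have hxA : x ∈ A := (Finset.mem_inter.mp (hXx ▸ Finset.mem_singleton_self x)).1
    have hxCa : x ∈ Ca := (Finset.mem_inter.mp (hXx ▸ Finset.mem_singleton_self x)).2
    have hdx : G.degree x = μ - 1 := (hmemA x).mp hxA
    have hRempty : Rst = ∅ := Finset.card_eq_zero.mp hX1.2.1
    have hCbcard : Cb.card = μ - 1 := hX1.2.2
    have hCbadjv : ∀ u ∈ Cb, G.Adj u v :=
      fun u hu => hreg_b.tight_adj_v hu (by rw [hCbA u hu, hCbcard])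
    have hCbclique : ∀ u' ∈ Cb, ∀ u'' ∈ Cb, u' ≠ u'' → G.Adj u' u'' := by
      intro u' hu' u'' hu'' hne
      exact hreg_b.tight_adj hu' (by rw [hCbA u' hu', hCbcard]) hu'' (Ne.symm hne)
    set Bv := B.erase v with hBvdef
    have hBvcard : Bv.card = ν - 1 := by rw [hBvdef, Finset.card_erase_of_mem hvB, hBcard]
    have hBvsub : Bv ⊆ Ca := by
      intro u hu
      obtain ⟨h1, h2⟩ := Finset.mem_erase.mp hu
      exact hBvCa u h2 h1
    have hxBv : x ∉ Bv := by
      intro h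
      have := (hmemB x).mp (Finset.mem_erase.mp h).2
      rw [hdx] at this
      exact hvals this
    have hCamem : ∀ u ∈ Ca, u = x ∨ u ∈ Bv := by
      intro u hu
      by_cases hx : u = x
      · exact Or.inl hx
      · by_cases huB : u ∈ B
        · exact Or.inr (Finset.mem_erase.mpr ⟨fun h => hreg_a.1 (h ▸ hu), huB⟩)
        · exfalso
          have : u ∈ X := Finset.mem_inter.mpr ⟨(hmemA u).mpr (hnotB u huB), hu⟩
          rw [hXx, Finset.mem_singleton] at this
          exact hx this
    have hCacard : Ca.card = ν := by omega
    have hvCa : v ∉ Ca := hreg_a.1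
    -- each u in Bv is adjacent to x or to v
    have hOR : ∀ u ∈ Bv, G.Adj u x ∨ G.Adj u v := by
      intro u hu
      by_contra hcon
      push_neg at hcon
      have hux : u ≠ x := fun h => hxBv (h ▸ hu)
      have hsub : G.neighborFinset u ⊆ (Ca.erase u).erase x := by
        intro z hz
        have h1 := hreg_a.nbhd (hBvsub hu) hz
        rw [Finset.mem_erase, Finset.mem_insert] at h1
        rw [mem_neighborFinset] at hz
        rcases h1.2 with h | h
        · exact absurd (h ▸ hz) hcon.2
        · refine Finset.mem_erase.mpr ⟨fun he => hcon.1 (he ▸ hz), Finset.mem_erase.mpr ⟨h1.1, h⟩⟩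
      have h2 := Finset.card_le_card hsub
      rw [G.card_neighborFinset_eq_degree, (hmemB u).mp (Finset.mem_erase.mp hu).2,
        Finset.card_erase_of_mem (Finset.mem_erase.mpr ⟨Ne.symm hux, hxCa⟩),
        Finset.card_erase_of_mem (hBvsub hu), hCacard] at h2
      omega
    set X' := G.neighborFinset x ∩ Bv with hX'def
    set Y' := G.neighborFinset v ∩ Bv with hY'def
    -- degree of x decomposition
    have hNx : ∀ z ∈ G.neighborFinset x, z ∈ Bv ∨ z = v := by
      intro z hz
      have h1 := hreg_a.nbhd hxCa hz
      rw [Finset.mem_erase, Finset.mem_insert] at h1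
      rcases h1.2 with h | h
      · exact Or.inr h
      · rcases hCamem z h with h' | h'
        · exact absurd h' h1.1
        · exact Or.inl h'
    have hdegxsplit : μ - 1 = X'.card + (G.neighborFinset x ∩ {v}).card := by
      have hcover : G.neighborFinset x = X' ∪ (G.neighborFinset x ∩ {v}) := by
        rw [hX'def, ← Finset.inter_union_distrib_left]
        refine (Finset.inter_eq_left.mpr ?_).symm
        intro z hz
        rw [Finset.mem_union, Finset.mem_singleton]
        exact hNx z hz
      have hdisj' : Disjoint X' (G.neighborFinset x ∩ {v}) := by
        refine Finset.disjoint_left.mpr ?_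
        intro z hz hz'
        have h1 := (Finset.mem_inter.mp hz).2
        have h2 := Finset.mem_singleton.mp (Finset.mem_inter.mp hz').2
        exact (Finset.mem_erase.mp (h2 ▸ h1)).1 rfl
      rw [← hdx, ← G.card_neighborFinset_eq_degree]
      conv_lhs => rw [hcover]
      rw [Finset.card_union_of_disjoint hdisj']
    -- degree of v decomposition
    have hCbN : Cb ⊆ G.neighborFinset v := by
      intro z hz
      rw [mem_neighborFinset]
      exact (hCbadjv z hz).symm
    have hNvCb : G.neighborFinset v ∩ Cb = Cb := Finset.inter_eq_right.mpr hCbN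
    have hdegvsplit : ν - 1 = Y'.card + (G.neighborFinset v ∩ {x}).card + (μ - 1) := by
      have hcover : G.neighborFinset v
          = Y' ∪ (G.neighborFinset v ∩ {x}) ∪ (G.neighborFinset v ∩ Cb) := by
        rw [hY'def, ← Finset.inter_union_distrib_left, ← Finset.inter_union_distrib_left]
        refine (Finset.inter_eq_left.mpr ?_).symm
        intro z hz
        rw [mem_neighborFinset] at hz
        simp only [Finset.mem_union, Finset.mem_singleton]
        rcases hparts z with h | h | h | h
        · exact absurd h hz.ne'
        · rcases hCamem z h with h' | h'
          · exact Or.inl (Or.inr h')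
          · exact Or.inl (Or.inl h')
        · exact Or.inr h
        · rw [hRempty] at h; simp at h
      have hd1 : Disjoint Y' (G.neighborFinset v ∩ {x}) := by
        refine Finset.disjoint_left.mpr ?_
        intro z hz hz'
        have h1 := (Finset.mem_inter.mp hz).2
        have h2 := Finset.mem_singleton.mp (Finset.mem_inter.mp hz').2
        exact hxBv (h2 ▸ h1)
      have hd2 : Disjoint (Y' ∪ (G.neighborFinset v ∩ {x})) (G.neighborFinset v ∩ Cb) := by
        refine Finset.disjoint_left.mpr ?_
        intro z hz hz'
        have h2 := (Finset.mem_inter.mp hz').2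
        rcases Finset.mem_union.mp hz with h | h
        · exact Finset.disjoint_left.mp hdisj (hBvsub (Finset.mem_inter.mp h).2) h2
        · have := Finset.mem_singleton.mp (Finset.mem_inter.mp h).2
          exact Finset.disjoint_left.mp hdisj (this ▸ hxCa) h2
      rw [← hdegv, ← G.card_neighborFinset_eq_degree]
      conv_lhs => rw [hcover]
      rw [Finset.card_union_of_disjoint hd2, Finset.card_union_of_disjoint hd1, hNvCb, hCbcard]
    -- Bv is covered by X' and Y'
    have hBvcover : Bv ⊆ X' ∪ Y' := by
      intro u hu
      rcases hOR u hu with h | h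
      · exact Finset.mem_union.mpr (Or.inl (Finset.mem_inter.mpr
          ⟨by rw [mem_neighborFinset]; exact h.symm, hu⟩))
      · exact Finset.mem_union.mpr (Or.inr (Finset.mem_inter.mpr
          ⟨by rw [mem_neighborFinset]; exact h.symm, hu⟩))
    have hXYBv : X' ∪ Y' ⊆ Bv := by
      intro u hu
      rcases Finset.mem_union.mp hu with h | h
      · exact (Finset.mem_inter.mp h).2
      · exact (Finset.mem_inter.mp h).2
    have hcup : (X' ∪ Y').card + (X' ∩ Y').card = X'.card + Y'.card :=
      Finset.card_union_add_card_inter X' Y'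
    have hle1 : ν - 1 ≤ (X' ∪ Y').card := hBvcard ▸ Finset.card_le_card hBvcover
    have hle2 : (X' ∪ Y').card ≤ ν - 1 := hBvcard ▸ Finset.card_le_card hXYBv
    -- x is not adjacent to v, and X', Y' partition Bv
    have hxvcards : (G.neighborFinset x ∩ {v}).card = (G.neighborFinset v ∩ {x}).card := by
      by_cases hxv : G.Adj x v
      · rw [Finset.inter_singleton_of_mem (by rw [mem_neighborFinset]; exact hxv),
          Finset.inter_singleton_of_mem (by rw [mem_neighborFinset]; exact hxv.symm)]
        try simp
      · rw [Finset.inter_singleton_of_notMem (by rw [mem_neighborFinset]; exact hxv),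
          Finset.inter_singleton_of_notMem (by
            rw [mem_neighborFinset]; exact fun h => hxv h.symm)]
        try simp
    have hecard : (G.neighborFinset x ∩ {v}).card ≤ 1 :=
      le_trans (Finset.card_le_card Finset.inter_subset_right) (by simp)
    have hX'card : X'.card = μ - 1 ∧ (G.neighborFinset x ∩ {v}).card = 0 := by
      constructor <;> omega
    have hY'card : Y'.card = ν - μ := by omega
    have hinter : X' ∩ Y' = ∅ := Finset.card_eq_zero.mp (by omega)
    -- Bv is a clique
    have hBvclique : ∀ u' ∈ Bv, ∀ u'' ∈ Bv, u' ≠ u'' → G.Adj u' u'' := by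
      intro u' hu' u'' hu'' hne
      by_contra hnadj
      have hsub : G.neighborFinset u' ⊆ ((insert v Ca).erase u').erase u'' := by
        intro z hz
        have h1 := hreg_a.nbhd (hBvsub hu') hz
        refine Finset.mem_erase.mpr ⟨?_, h1⟩
        intro he
        rw [mem_neighborFinset] at hz
        exact hnadj (he ▸ hz)
      have hEq : G.neighborFinset u' = ((insert v Ca).erase u').erase u'' := by
        refine Finset.eq_of_subset_of_card_le hsub ?_
        rw [Finset.card_erase_of_mem, Finset.card_erase_of_mem (Finset.mem_insert_of_mem
          (hBvsub hu')), Finset.card_insert_of_notMem hvCa, hCacard,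
          G.card_neighborFinset_eq_degree, (hmemB u').mp (Finset.mem_erase.mp hu').2]
        · omega
        · refine Finset.mem_erase.mpr ⟨Ne.symm hne, Finset.mem_insert_of_mem (hBvsub hu'')⟩
      have hxmem : x ∈ G.neighborFinset u' := by
        rw [hEq]
        refine Finset.mem_erase.mpr ⟨fun h => hxBv (h ▸ hu''), Finset.mem_erase.mpr
          ⟨fun h => hxBv (h ▸ hu'), Finset.mem_insert_of_mem hxCa⟩⟩
      have hvmem : v ∈ G.neighborFinset u' := by
        rw [hEq]
        refine Finset.mem_erase.mpr ⟨fun h => (Finset.mem_erase.mp hu'').1 h.symm,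
          Finset.mem_erase.mpr ⟨fun h => (Finset.mem_erase.mp hu').1 h.symm,
          Finset.mem_insert_self v _⟩⟩
      have : u' ∈ X' ∩ Y' := by
        rw [mem_neighborFinset] at hxmem hvmem
        exact Finset.mem_inter.mpr ⟨Finset.mem_inter.mpr
          ⟨by rw [mem_neighborFinset]; exact hxmem.symm, hu'⟩,
          Finset.mem_inter.mpr ⟨by rw [mem_neighborFinset]; exact hvmem.symm, hu'⟩⟩
      rw [hinter] at this
      simp at this
    -- choose t and w
    have hY'ne : Y'.Nonempty := Finset.card_pos.mp (by omega)
    have hX'ne : X'.Nonempty := Finset.card_pos.mp (by omega)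
    obtain ⟨t, ht⟩ := hY'ne
    obtain ⟨w, hw⟩ := hX'ne
    have htBv : t ∈ Bv := (Finset.mem_inter.mp ht).2
    have hwBv : w ∈ Bv := (Finset.mem_inter.mp hw).2
    have hvt : G.Adj v t := by
      have := (Finset.mem_inter.mp ht).1
      rwa [mem_neighborFinset] at this
    have hxw : G.Adj x w := by
      have := (Finset.mem_inter.mp hw).1
      rwa [mem_neighborFinset] at this
    have htw : t ≠ w := by
      intro h
      have : t ∈ X' ∩ Y' := Finset.mem_inter.mpr ⟨h ▸ hw, ht⟩
      rw [hinter] at this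
      simp at this
    -- build the list
    set mid := ((Bv.erase t).erase w).toList with hmid
    have hmidmem : ∀ z ∈ mid, z ∈ (Bv.erase t).erase w := fun z hz => Finset.mem_toList.mp hz
    set l3 : List V := (t :: mid) ++ [w] with hl3
    have hl3mem : ∀ z ∈ l3, z ∈ Bv := by
      intro z hz
      rw [hl3] at hz
      simp only [List.mem_append, List.mem_cons, List.mem_singleton, List.not_mem_nil,
        or_false] at hz
      rcases hz with (h | h) | h
      · exact h ▸ htBv
      · exact (Finset.mem_erase.mp (Finset.mem_erase.mp (hmidmem z h)).2).2
      · exact h ▸ hwBv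
    have hl3nd : l3.Nodup := by
      rw [hl3]
      refine List.Nodup.append ?_ (List.nodup_singleton w) ?_
      · refine List.nodup_cons.mpr ⟨?_, Finset.nodup_toList _⟩
        intro h
        exact (Finset.mem_erase.mp (Finset.mem_erase.mp (hmidmem t h)).2).1 rfl
      · intro z hz hz'
        rw [List.mem_singleton] at hz'
        subst hz'
        rcases List.mem_cons.mp hz with h | h
        · exact htw h.symm
        · exact (Finset.mem_erase.mp (hmidmem z h)).1 rfl
    set l : List V := Cb.toList ++ v :: (l3 ++ [x]) with hl
    have hl3x : ∀ z ∈ l3 ++ [x], z ∈ Ca := by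
      intro z hz
      rcases List.mem_append.mp hz with h | h
      · exact hBvsub (hl3mem z h)
      · rw [List.mem_singleton] at h
        exact h ▸ hxCa
    refine ham_of_list l ?_ ?_ ?_ (by simp [hl])
    · -- Nodup
      rw [hl]
      have hnd1 : (l3 ++ [x]).Nodup := by
        refine List.Nodup.append hl3nd (List.nodup_singleton x) ?_
        intro z hz hz'
        rw [List.mem_singleton] at hz'
        exact hxBv (hz' ▸ hl3mem z hz)
      have hvnot : v ∉ l3 ++ [x] := fun h => hvCa (hl3x v h)
      refine List.Nodup.append (Finset.nodup_toList _) (List.nodup_cons.mpr ⟨hvnot, hnd1⟩) ?_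
      intro z hz hz'
      have hzCb : z ∈ Cb := Finset.mem_toList.mp hz
      rcases List.mem_cons.mp hz' with h | h
      · exact hreg_b.1 (h ▸ hzCb)
      · exact Finset.disjoint_left.mp hdisj (hl3x z h) hzCb
    · -- coverage
      intro z
      rw [hl]
      simp only [List.mem_append, List.mem_cons, List.mem_singleton]
      rcases hparts z with h | h | h | h
      · tauto
      · rcases hCamem z h with h' | h'
        · tauto
        · -- z ∈ Bv : z = t ∨ z = w ∨ z ∈ mid
          by_cases hzt : z = t
          · rw [hl3]; simp [hzt]
          by_cases hzw : z = w
          · rw [hl3]; simp [hzw]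
          have : z ∈ mid := Finset.mem_toList.mpr
            (Finset.mem_erase.mpr ⟨hzw, Finset.mem_erase.mpr ⟨hzt, h'⟩⟩)
          rw [hl3]; simp [this]
      · exact Or.inl (Finset.mem_toList.mpr h)
      · rw [hRempty] at h; simp at h
    · -- chain
      rw [hl]
      refine List.isChain_append.mpr ⟨?_, ?_, ?_⟩
      · exact chain_of_clique hCbclique _ (Finset.nodup_toList _)
          (fun z hz => Finset.mem_toList.mp hz)
      · -- Chain' (v :: (l3 ++ [x]))
        refine List.isChain_cons.mpr ⟨?_, ?_⟩
        · intro y hy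
          rw [hl3] at hy
          simp only [List.cons_append, List.head?_cons, Option.mem_some_iff] at hy
          exact hy ▸ hvt
        · refine List.isChain_append.mpr ⟨?_, List.isChain_singleton x, ?_⟩
          · exact chain_of_clique hBvclique l3 hl3nd hl3mem
          · intro y' hy' y'' hy''
            simp only [List.head?_cons, Option.mem_some_iff] at hy''
            have : y' = w := by
              rw [hl3] at hy'
              rw [List.getLast?_concat] at hy'
              exact (Option.mem_some_iff.mp hy').symm
            subst this
            subst hy''
            exact hxw.symm
      · intro y' hy' y'' hy''
        simp only [List.head?_cons, Option.mem_some_iff] at hy''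
        have hyCb : y' ∈ Cb := Finset.mem_toList.mp (List.mem_of_mem_getLast? hy')
        exact hy''.symm ▸ (hCbadjv y' hyCb)


lemma main_core (μ ν : ℕ) (h1μ : 1 ≤ μ) (hμν : μ < ν) (hcard : Fintype.card V = μ + ν)
    (hdich : ∀ u, G.degree u = μ-1 ∨ G.degree u = ν-1)
    (hBcard : (Finset.univ.filter (fun u => G.degree u = ν-1)).card = ν)
    (v a b : V) (ha : a ≠ v) (hb : b ≠ v) (hreach : G.Reachable a b)
    (hsep : ¬ Avoid G v a b)
    (hone : (∃ u ∈ aclass G v b, G.degree u = ν-1) → (∃ u ∈ aclass G v a, G.degree u = ν-1)) :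
    ∃ (u w : V) (p : G.Walk u w), p.IsHamiltonian := by
  classical
  rcases hdich v with hdegv | hdegv
  · exact (vA_aux μ ν h1μ hμν hcard hdich hBcard v a b ha hb hreach hsep hdegv hone).elim
  · by_cases hBa : ∃ u ∈ aclass G v a, G.degree u = ν-1
    · obtain ⟨u1, hu1, hdu1⟩ := hBa
      by_cases hBb : ∃ u ∈ aclass G v b, G.degree u = ν-1
      · obtain ⟨u2, hu2, hdu2⟩ := hBb
        exact famII μ ν h1μ hμν hcard hdich hBcard v a b ha hb hreach hsep hdegv
          u1 hu1 hdu1 u2 hu2 hdu2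
      · push_neg at hBb
        exact famI μ ν h1μ hμν hcard hdich hBcard v a b ha hb hreach hsep hdegv
          u1 hu1 hdu1 hBb
    · exfalso
      have hvals : μ - 1 ≠ ν - 1 := by omega
      have hBb : ¬ ∃ u ∈ aclass G v b, G.degree u = ν-1 := fun h => hBa (hone h)
      push_neg at hBa hBb
      have hba : ¬ Avoid G v b a := fun h => hsep (avoid_symm h)
      obtain ⟨ta, hta, htav⟩ := aclass_exit hreach ha hsep
      have hsum : (aclass G v a).card + (aclass G v b).card + (rest G v a b).card + 1
          = Fintype.card V := region_card_sum v a b hsep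
      rw [hcard] at hsum
      have hCaA : ∀ u ∈ aclass G v a, G.degree u = μ-1 := by
        intro u hu
        rcases hdich u with h | h
        · exact h
        · exact absurd h (hBa u hu)
      have hCbA : ∀ u ∈ aclass G v b, G.degree u = μ-1 := by
        intro u hu
        rcases hdich u with h | h
        · exact h
        · exact absurd h (hBb u hu)
      have hCage : μ - 1 ≤ (aclass G v a).card :=
        (hCaA a (self_mem_aclass ha)) ▸ (aclass_region v a).deg_le (self_mem_aclass ha)
      have hCbge : μ - 1 ≤ (aclass G v b).card :=
        (hCbA b (self_mem_aclass hb)) ▸ (aclass_region v b).deg_le (self_mem_aclass hb)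
      have hCane : 1 ≤ (aclass G v a).card := Finset.card_pos.mpr ⟨a, self_mem_aclass ha⟩
      have hCbne : 1 ≤ (aclass G v b).card := Finset.card_pos.mpr ⟨b, self_mem_aclass hb⟩
      set B := Finset.univ.filter (fun u => G.degree u = ν-1) with hBdef
      have hmemB : ∀ u, u ∈ B ↔ G.degree u = ν-1 := by intro u; simp [hBdef]
      have hvB : v ∈ B := (hmemB v).mpr hdegv
      have hBsub : B.erase v ⊆ rest G v a b := by
        intro u hu
        obtain ⟨h1, h2⟩ := Finset.mem_erase.mp hu
        have hdu := (hmemB u).mp h2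
        rcases mem_parts (v := v) (a := a) (b := b) (u := u) hsep with h | h | h | h
        · exact absurd h h1
        · exact absurd (hCaA u h) (by rw [hdu]; omega)
        · exact absurd (hCbA u h) (by rw [hdu]; omega)
        · exact h
      have hRge : ν - 1 ≤ (rest G v a b).card := by
        have := Finset.card_le_card hBsub
        rwa [Finset.card_erase_of_mem hvB, hBcard] at this
      have hkey : (aclass G v a).card = 1 ∧ (aclass G v b).card = 1 ∧
          (rest G v a b).card = ν - 1 ∧ μ ≤ 2 := by omega
      have hBveq : B.erase v = rest G v a b := by
        refine Finset.eq_of_subset_of_card_le hBsub ?_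
        rw [Finset.card_erase_of_mem hvB, hBcard, hkey.2.2.1]
      have hadjall : ∀ u ∈ rest G v a b, G.Adj u v := by
        intro u hu
        have hdu : G.degree u = ν - 1 := by
          have : u ∈ B.erase v := hBveq ▸ hu
          exact (hmemB u).mp (Finset.mem_erase.mp this).2
        exact (rest_region v a b).tight_adj_v hu (by rw [hdu, hkey.2.2.1])
      have htaR : ta ∉ rest G v a b := fun h => (mem_rest.mp h).2.1 hta
      have hsub2 : insert ta (rest G v a b) ⊆ G.neighborFinset v := by
        intro z hz
        rw [mem_neighborFinset]
        rcases Finset.mem_insert.mp hz with h | h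
        · exact h ▸ htav
        · exact (hadjall z h).symm
      have h3 := Finset.card_le_card hsub2
      rw [Finset.card_insert_of_notMem htaR, G.card_neighborFinset_eq_degree, hdegv,
        hkey.2.2.1] at h3
      omega


lemma count_big {m n : ℕ}
    (hdeg : degreeMultiset G = Multiset.replicate m (m-1) + Multiset.replicate n (n-1))
    (hne : m - 1 ≠ n - 1) :
    (Finset.univ.filter (fun u => G.degree u = n-1)).card = n := by
  classical
  have h1 : Multiset.count (n-1) (degreeMultiset G) = n := by
    rw [hdeg, Multiset.count_add, Multiset.count_replicate, Multiset.count_replicate]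
    rw [if_neg hne, if_pos rfl]
    omega
  rw [degreeMultiset, Multiset.count_map] at h1
  have h2 : (Finset.univ.filter (fun u => G.degree u = n-1)).card
      = Multiset.card (Multiset.filter (fun a => n - 1 = G.degree a) Finset.univ.val) := by
    rw [Finset.card, Finset.filter_val]
    congr 1
    refine Multiset.filter_congr ?_
    intro x _
    exact eq_comm
  rw [h2]
  convert h1 using 2

lemma count_small {m n : ℕ}
    (hdeg : degreeMultiset G = Multiset.replicate m (m-1) + Multiset.replicate n (n-1))
    (hne : m - 1 ≠ n - 1) :
    (Finset.univ.filter (fun u => G.degree u = m-1)).card = m := by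
  classical
  have h1 : Multiset.count (m-1) (degreeMultiset G) = m := by
    rw [hdeg, Multiset.count_add, Multiset.count_replicate, Multiset.count_replicate]
    rw [if_pos rfl, if_neg (Ne.symm hne)]
    omega
  rw [degreeMultiset, Multiset.count_map] at h1
  have h2 : (Finset.univ.filter (fun u => G.degree u = m-1)).card
      = Multiset.card (Multiset.filter (fun a => m - 1 = G.degree a) Finset.univ.val) := by
    rw [Finset.card, Finset.filter_val]
    congr 1
    refine Multiset.filter_congr ?_
    intro x _
    exact eq_comm
  rw [h2]
  convert h1 using 2


end Main

theorem stmt_1 (m n : ℕ) {V : Type} [Fintype V] [DecidableEq V] (G : SimpleGraph V) [DecidableRel G.Adj]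
    (hG : MemGmn m n G) (hcut : ∃ v, IsCutVertex G v) :
    ∃ (u w : V) (p : G.Walk u w), p.IsHamiltonian := by
  classical
  obtain ⟨v, hv⟩ := hcut
  obtain ⟨a, b, hav, hbv, hreach, hsep⟩ := cut_sep hv
  have hcardV := hG.1
  have hdegeq := hG.2.1
  have hmem0 : ∀ u : V, (m ≠ 0 ∧ G.degree u = m-1) ∨ (n ≠ 0 ∧ G.degree u = n-1) := by
    intro u
    have hmem : G.degree u ∈ degreeMultiset G := by
      rw [degreeMultiset]
      exact Multiset.mem_map_of_mem _ (Finset.mem_val.mpr (Finset.mem_univ u))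
    rw [hdegeq, Multiset.mem_add] at hmem
    rcases hmem with h | h <;> rw [Multiset.mem_replicate] at h
    · exact Or.inl h
    · exact Or.inr h
  rcases Nat.lt_trichotomy m n with hmn | hmn | hmn
  · by_cases hm0 : m = 0
    · exfalso
      have hall : ∀ u, G.degree u = n-1 := by
        intro u
        rcases hmem0 u with ⟨h, _⟩ | ⟨_, h⟩
        · exact (h hm0).elim
        · exact h
      exact equal_deg_contra (n-1) hall (by rw [hcardV]; omega) v a b hav hbv hreach hsep
    · have h1m : 1 ≤ m := by omega
      have hdich : ∀ u, G.degree u = m-1 ∨ G.degree u = n-1 :=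
        fun u => (hmem0 u).imp And.right And.right
      have hBcard := count_big hdegeq (show m-1 ≠ n-1 by omega)
      by_cases hBa : ∃ u ∈ aclass G v a, G.degree u = n-1
      · exact main_core m n h1m hmn hcardV hdich hBcard v a b hav hbv hreach hsep (fun _ => hBa)
      · exact main_core m n h1m hmn hcardV hdich hBcard v b a hbv hav hreach.symm
          (fun h => hsep (avoid_symm h)) (fun h => absurd h hBa)
  · exfalso
    have hn1 : 1 ≤ n := by
      by_contra h
      have h0 : Fintype.card V = 0 := by omega
      have := Fintype.card_pos_iff.mpr ⟨v⟩
      omega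
    have hall : ∀ u, G.degree u = n-1 := by
      intro u
      rcases hmem0 u with ⟨_, h⟩ | ⟨_, h⟩
      · rw [h, hmn]
      · exact h
    exact equal_deg_contra (n-1) hall (by rw [hcardV]; omega) v a b hav hbv hreach hsep
  · by_cases hn0 : n = 0
    · exfalso
      have hall : ∀ u, G.degree u = m-1 := by
        intro u
        rcases hmem0 u with ⟨_, h⟩ | ⟨h, _⟩
        · exact h
        · exact (h hn0).elim
      exact equal_deg_contra (m-1) hall (by rw [hcardV]; omega) v a b hav hbv hreach hsep
    · have h1n : 1 ≤ n := by omega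
      have hdich : ∀ u, G.degree u = n-1 ∨ G.degree u = m-1 :=
        fun u => ((hmem0 u).imp And.right And.right).symm
      have hBcard := count_small hdegeq (show m-1 ≠ n-1 by omega)
      have hcard2 : Fintype.card V = n + m := by rw [hcardV]; omega
      by_cases hBa : ∃ u ∈ aclass G v a, G.degree u = m-1
      · exact main_core n m h1n hmn hcard2 hdich hBcard v a b hav hbv hreach hsep (fun _ => hBa)
      · exact main_core n m h1n hmn hcard2 hdich hBcard v b a hbv hav hreach.symm
          (fun h => hsep (avoid_symm h)) (fun h => absurd h hBa)
end

section
/- Let m and n be natural numbers with m ≥ 3 and n = m+2, and let G be a simple graph in the class G_{m,n} that is bipartite with bipartition (V_1, V_2) satisfying |V_1| = |V_2|. Then G is Hamiltonian, i.e., G contains a cycle passing through every vertex exactly once. -/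
open SimpleGraph

namespace StmtAux

variable {V : Type} 

/-- Interleave two lists. -/
def interleave : List V → List V → List V
  | [], ys => ys
  | xs, [] => xs
  | x :: xs, y :: ys => x :: y :: interleave xs ys

theorem interleave_perm : ∀ (xs ys : List V), (interleave xs ys).Perm (xs ++ ys)
  | [], ys => by simp [interleave]
  | x :: xs, [] => by simp [interleave]
  | x :: xs, y :: ys => by
    simp only [interleave, List.cons_append]
    refine (((interleave_perm xs ys).cons y).cons x).trans ?_
    exact ((List.perm_middle (a := y) (l₁ := xs) (l₂ := ys)).symm.cons x)

theorem head?_interleave_cons (x : V) (xs ys : List V) :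
    (interleave (x :: xs) ys).head? = some x := by
  cases ys <;> rfl

theorem getLast?_interleave_eq : ∀ (xs ys : List V), xs.length = ys.length →
    (interleave xs ys).getLast? = ys.getLast?
  | [], [], _ => rfl
  | [], y :: ys, h => by simp at h
  | x :: xs, [], h => by simp at h
  | x :: xs, y :: ys, h => by
    simp only [List.length_cons, Nat.add_right_cancel_iff] at h
    cases xs with
    | nil =>
      have : ys = [] := by cases ys <;> simp_all
      subst this; rfl
    | cons a as =>
      have hys : ys ≠ [] := by
        intro hy; subst hy; simp at h
      simp only [interleave, List.getLast?_cons_cons]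
      rw [show (interleave (a :: as) ys) = _ from rfl] -- keep
      have hne : interleave (a :: as) ys ≠ [] := by
        cases ys <;> simp [interleave]
      calc (y :: interleave (a :: as) ys).getLast?
          = (interleave (a :: as) ys).getLast? := by
            cases hInt : interleave (a :: as) ys with
            | nil => exact absurd hInt hne
            | cons b bs => rw [List.getLast?_cons_cons]
        _ = ys.getLast? := getLast?_interleave_eq (a :: as) ys h
        _ = (y :: ys).getLast? := by
            cases ys with
            | nil => exact absurd rfl hys
            | cons c cs => rw [List.getLast?_cons_cons]

theorem getLast?_interleave_succ : ∀ (xs ys : List V), xs.length = ys.length + 1 →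
    (interleave xs ys).getLast? = xs.getLast?
  | [], ys, h => by simp at h
  | x :: xs, [], h => by simp [interleave]
  | x :: xs, y :: ys, h => by
    simp only [List.length_cons, Nat.add_right_cancel_iff] at h
    have hxs : xs ≠ [] := by intro hx; subst hx; simp at h
    simp only [interleave, List.getLast?_cons_cons]
    obtain ⟨a, as, rfl⟩ : ∃ a as, xs = a :: as := by
      cases xs with
      | nil => exact absurd rfl hxs
      | cons a as => exact ⟨a, as, rfl⟩
    have hne : interleave (a :: as) ys ≠ [] := by
      cases ys <;> simp [interleave]
    calc (y :: interleave (a :: as) ys).getLast?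
        = (interleave (a :: as) ys).getLast? := by
          cases hInt : interleave (a :: as) ys with
          | nil => exact absurd hInt hne
          | cons b bs => rw [List.getLast?_cons_cons]
      _ = (a :: as).getLast? := getLast?_interleave_succ (a :: as) ys h

theorem chain'_interleave {R : V → V → Prop} : ∀ (xs ys : List V),
    ys.length ≤ xs.length → xs.length ≤ ys.length + 1 →
    (∀ x ∈ xs, ∀ y ∈ ys, R x y ∧ R y x) →
    List.Chain' R (interleave xs ys)
  | [], ys, h1, _, _ => by
    have : ys = [] := by cases ys <;> simp_all
    subst this; simp [interleave, List.Chain']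
  | x :: xs, [], _, h2, _ => by
    have : xs = [] := by cases xs <;> simp_all
    subst this; simp [interleave, List.Chain']
  | x :: xs, y :: ys, h1, h2, hR => by
    simp only [List.length_cons, Nat.succ_le_succ_iff] at h1 h2
    simp only [interleave]
    refine List.IsChain.cons_cons ?_ ?_
    · exact (hR x (by simp) y (by simp)).1
    · refine List.isChain_cons.2 ⟨?_, ?_⟩
      · intro z hz
        cases xs with
        | nil => simp [show ys = [] by cases ys <;> simp_all, interleave] at hz
        | cons a as =>
          rw [head?_interleave_cons] at hz
          cases hz
          exact (hR _ (by simp) y (by simp)).2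
      · exact chain'_interleave xs ys h1 h2 fun a ha b hb =>
          hR a (by simp [ha]) b (by simp [hb])


variable {G : SimpleGraph V}

/-- Build a walk from a chain of adjacencies. -/
def walkOfChain : (a b : V) → (l : List V) → List.Chain G.Adj a (l ++ [b]) → G.Walk a b
  | _, _, [], h => Walk.cons (by simpa [List.Chain] using h) Walk.nil
  | _, b, c :: l, h =>
    Walk.cons (List.chain_cons.1 h).1 (walkOfChain c b l (List.chain_cons.1 h).2)

theorem support_walkOfChain : ∀ (a b : V) (l : List V) (h : List.Chain G.Adj a (l ++ [b])),
    (walkOfChain a b l h).support = a :: (l ++ [b])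
  | _, _, [], h => rfl
  | a, b, c :: l, h => by
    simp only [walkOfChain, Walk.support_cons, support_walkOfChain c b l, List.cons_append]
    exact congrArg (a :: ·) (support_walkOfChain c b l _)

theorem chain_concat {R : V → V → Prop} {b : V} :
    ∀ {a : V} {l : List V}, List.Chain R a l → (∀ z ∈ (a :: l).getLast?, R z b) →
      List.Chain R a (l ++ [b])
  | a, [], _, hz => by
    simp only [List.nil_append]
    exact List.chain_cons.2 ⟨hz a rfl, List.Chain.nil⟩
  | a, c :: l, hc, hz => by
    rcases List.chain_cons.1 hc with ⟨hac, hcl⟩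
    simp only [List.cons_append]
    exact List.chain_cons.2 ⟨hac, chain_concat hcl (by
      intro z hzl
      exact hz z (by rw [List.getLast?_cons_cons]; exact hzl))⟩

theorem not_mem_edges_of_isPath {y z : V} :
    ∀ (q : G.Walk y z), q.IsPath → 2 ≤ q.length → s(z, y) ∉ q.edges
  | Walk.nil, _, hl => by simp at hl
  | Walk.cons h r, hq, hl => by
    intro hmem
    rw [Walk.edges_cons] at hmem
    rcases List.mem_cons.1 hmem with heq | hmem'
    · rw [Sym2.eq_iff] at heq
      rcases heq with ⟨rfl, rfl⟩ | ⟨rfl, -⟩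
      · exact (Walk.cons_isPath_iff _ _).1 hq |>.2 r.end_mem_support
      · have : r = Walk.nil := (Walk.isPath_iff_eq_nil (p := r)).1 ((Walk.cons_isPath_iff _ _).1 hq).1
        subst this
        simp [Walk.length_cons] at hl
    · exact ((Walk.cons_isPath_iff _ _).1 hq).2 (Walk.snd_mem_support_of_mem_edges r hmem')

theorem ham_of_cycle_list [DecidableEq V] (L : List V)
    (h3 : 3 ≤ L.length) (hnod : L.Nodup) (hcov : ∀ v, v ∈ L) (hch : L.Chain' G.Adj)
    (hcl : ∀ x ∈ L.getLast?, ∀ y ∈ L.head?, G.Adj x y) :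
    ∃ (a : V) (p : G.Walk a a), p.IsHamiltonianCycle := by
  obtain ⟨x, c, l, rfl⟩ : ∃ x c l, L = x :: c :: l := by
    match L, h3 with
    | x :: c :: l, _ => exact ⟨x, c, l, rfl⟩
  have hxc : G.Adj x c := (List.isChain_cons_cons.1 hch).1
  have hchain : List.Chain G.Adj c l := by
    have := (List.isChain_cons_cons.1 hch).2
    exact this
  have hclose : ∀ z ∈ (c :: l).getLast?, G.Adj z x := by
    intro z hz
    exact hcl z (by rw [List.getLast?_cons_cons]; exact hz) x rfl
  have hchain2 : List.Chain G.Adj c (l ++ [x]) := chain_concat hchain hclose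
  set q : G.Walk c x := walkOfChain c x l hchain2 with hq
  have hsupp : q.support = c :: (l ++ [x]) := support_walkOfChain c x l hchain2
  have hperm : (c :: (l ++ [x])).Perm (x :: c :: l) := by
    have : ((c :: l) ++ [x]).Perm (x :: c :: l) := List.perm_append_singleton x (c :: l)
    simpa using this
  have hqnodup : q.support.Nodup := by
    rw [hsupp]
    exact hperm.nodup_iff.2 hnod
  have hqpath : q.IsPath := Walk.IsPath.mk' hqnodup
  have hqlen : 2 ≤ q.length := by
    have : q.support.length = q.length + 1 := Walk.length_support q
    rw [hsupp] at this
    simp only [List.length_cons, List.length_append, List.length_cons, List.length_nil] at this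
    simp only [List.length_cons] at h3
    omega
  have hedge : s(x, c) ∉ q.edges := not_mem_edges_of_isPath q hqpath hqlen
  refine ⟨x, Walk.cons hxc q, ?_⟩
  rw [Walk.isHamiltonianCycle_iff_isCycle_and_support_count_tail_eq_one]
  constructor
  · exact (Walk.cons_isCycle_iff q hxc).2 ⟨hqpath, hedge⟩
  · intro a
    have htail : (Walk.cons hxc q).support.tail = q.support := by
      rw [Walk.support_cons]; rfl
    rw [htail, hsupp]
    refine List.count_eq_one_of_mem (hperm.nodup_iff.2 hnod) ?_
    exact hperm.mem_iff.2 (hcov a)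

end StmtAux

open StmtAux

/-- `G` is bipartite with bipartition `(V₁, V₂)`: the two parts are nonempty, disjoint,
independent sets covering all vertices. -/
def IsBipartition {V : Type} (G : SimpleGraph V) (V₁ V₂ : Set V) : Prop :=
  V₁.Nonempty ∧ V₂.Nonempty ∧ Disjoint V₁ V₂ ∧ V₁ ∪ V₂ = Set.univ ∧
  (∀ u ∈ V₁, ∀ v ∈ V₁, ¬ G.Adj u v) ∧ (∀ u ∈ V₂, ∀ v ∈ V₂, ¬ G.Adj u v)

theorem stmt_9 (m n : ℕ) (hm : 3 ≤ m) (hn : n = m + 2) {V : Type} [Fintype V] [DecidableEq V]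
    (G : SimpleGraph V) [DecidableRel G.Adj] (hG : MemGmn m n G)
    (V₁ V₂ : Set V) (hbip : IsBipartition G V₁ V₂) (heq : V₁.ncard = V₂.ncard) :
    ∃ (a : V) (p : G.Walk a a), p.IsHamiltonianCycle := by
  classical
  obtain ⟨hcard, hdeg, -⟩ := hG
  subst hn
  obtain ⟨hne₁, hne₂, hdisj, hcover, hind₁, hind₂⟩ := hbip
  set S₁ : Finset V := V₁.toFinite.toFinset with hS₁
  set S₂ : Finset V := V₂.toFinite.toFinset with hS₂
  have hmem₁ : ∀ v, v ∈ S₁ ↔ v ∈ V₁ := fun v => Set.Finite.mem_toFinset _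
  have hmem₂ : ∀ v, v ∈ S₂ ↔ v ∈ V₂ := fun v => Set.Finite.mem_toFinset _
  have hunion : ∀ v : V, v ∈ S₁ ∨ v ∈ S₂ := by
    intro v
    have : v ∈ V₁ ∪ V₂ := by rw [hcover]; trivial
    rcases this with h | h
    · exact Or.inl ((hmem₁ v).2 h)
    · exact Or.inr ((hmem₂ v).2 h)
  have hdisjF : Disjoint S₁ S₂ := by
    rw [Finset.disjoint_left]
    intro v h1 h2
    exact Set.disjoint_left.1 hdisj ((hmem₁ v).1 h1) ((hmem₂ v).1 h2)
  have hcard12 : S₁.card + S₂.card = 2 * m + 2 := by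
    rw [← Finset.card_union_of_disjoint hdisjF]
    have : S₁ ∪ S₂ = Finset.univ := by
      apply Finset.eq_univ_iff_forall.2
      intro v
      rcases hunion v with h | h
      · exact Finset.mem_union_left _ h
      · exact Finset.mem_union_right _ h
    rw [this, Finset.card_univ, hcard]; omega
  have heqc : S₁.card = S₂.card := by
    have e1 : V₁.ncard = S₁.card := Set.ncard_eq_toFinset_card _ _
    have e2 : V₂.ncard = S₂.card := Set.ncard_eq_toFinset_card _ _
    rw [← e1, ← e2, heq]
  have hcard1 : S₁.card = m + 1 := by omega
  have hcard2 : S₂.card = m + 1 := by omega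
  -- degrees are m-1 or m+1
  have hdegv : ∀ v : V, G.degree v = m - 1 ∨ G.degree v = m + 1 := by
    intro v
    have hv : G.degree v ∈ degreeMultiset G := by
      exact Multiset.mem_map_of_mem _ (Finset.mem_univ_val _)
    rw [hdeg, Multiset.mem_add, Multiset.mem_replicate, Multiset.mem_replicate] at hv
    rcases hv with ⟨-, h⟩ | ⟨-, h⟩
    · exact Or.inl h
    · right; rw [h]; omega
  -- neighborhoods
  have hnb₁ : ∀ v ∈ S₁, G.neighborFinset v ⊆ S₂ := by
    intro v hv u hu
    rw [SimpleGraph.mem_neighborFinset] at hu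
    rcases hunion u with h | h
    · exact absurd hu (hind₁ v ((hmem₁ v).1 hv) u ((hmem₁ u).1 h))
    · exact h
  have hnb₂ : ∀ v ∈ S₂, G.neighborFinset v ⊆ S₁ := by
    intro v hv u hu
    rw [SimpleGraph.mem_neighborFinset] at hu
    rcases hunion u with h | h
    · exact h
    · exact absurd hu (hind₂ v ((hmem₂ v).1 hv) u ((hmem₂ u).1 h))
  have hfull₁ : ∀ v ∈ S₁, G.degree v = m + 1 → ∀ u ∈ S₂, G.Adj v u := by
    intro v hv hd u hu
    have : G.neighborFinset v = S₂ := by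
      apply Finset.eq_of_subset_of_card_le (hnb₁ v hv)
      rw [SimpleGraph.card_neighborFinset_eq_degree, hd, hcard2]
    rw [← SimpleGraph.mem_neighborFinset, this]
    exact hu
  have hfull₂ : ∀ v ∈ S₂, G.degree v = m + 1 → ∀ u ∈ S₁, G.Adj v u := by
    intro v hv hd u hu
    have : G.neighborFinset v = S₁ := by
      apply Finset.eq_of_subset_of_card_le (hnb₂ v hv)
      rw [SimpleGraph.card_neighborFinset_eq_degree, hd, hcard1]
    rw [← SimpleGraph.mem_neighborFinset, this]
    exact hu
  -- degree as filter card
  have hdf₁ : ∀ v ∈ S₁, G.degree v = (S₂.filter (fun u => G.Adj v u)).card := by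
    intro v hv
    rw [← SimpleGraph.card_neighborFinset_eq_degree]
    congr 1
    apply Finset.ext
    intro u
    rw [SimpleGraph.mem_neighborFinset, Finset.mem_filter]
    constructor
    · intro h; exact ⟨hnb₁ v hv (by rw [SimpleGraph.mem_neighborFinset]; exact h), h⟩
    · intro h; exact h.2
  have hdf₂ : ∀ v ∈ S₂, G.degree v = (S₁.filter (fun u => G.Adj v u)).card := by
    intro v hv
    rw [← SimpleGraph.card_neighborFinset_eq_degree]
    congr 1
    apply Finset.ext
    intro u
    rw [SimpleGraph.mem_neighborFinset, Finset.mem_filter]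
    constructor
    · intro h; exact ⟨hnb₂ v hv (by rw [SimpleGraph.mem_neighborFinset]; exact h), h⟩
    · intro h; exact h.2
  -- sums over parts are equal
  have hsum12 : ∑ v ∈ S₁, G.degree v = ∑ u ∈ S₂, G.degree u := by
    calc ∑ v ∈ S₁, G.degree v
        = ∑ v ∈ S₁, ∑ u ∈ S₂, (if G.Adj v u then 1 else 0) := by
          apply Finset.sum_congr rfl
          intro v hv
          rw [hdf₁ v hv, Finset.card_filter]
      _ = ∑ u ∈ S₂, ∑ v ∈ S₁, (if G.Adj v u then 1 else 0) := Finset.sum_comm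
      _ = ∑ u ∈ S₂, G.degree u := by
          apply Finset.sum_congr rfl
          intro u hu
          rw [hdf₂ u hu, Finset.card_filter]
          apply Finset.sum_congr rfl
          intro v hv
          simp only [SimpleGraph.adj_comm]
  -- total degree sum
  have htot : ∑ v ∈ S₁, G.degree v + ∑ u ∈ S₂, G.degree u = m * (m - 1) + (m + 2) * (m + 1) := by
    have huniv : ∑ v : V, G.degree v = m * (m - 1) + (m + 2) * (m + 1) := by
      have h1 : ∑ v : V, G.degree v = (degreeMultiset G).sum := rfl
      rw [h1, hdeg, Multiset.sum_add, Multiset.sum_replicate, Multiset.sum_replicate]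
      have h2 : m + 2 - 1 = m + 1 := by omega
      rw [h2]
      simp [smul_eq_mul]
    rw [← huniv]
    rw [← Finset.sum_union hdisjF]
    apply Finset.sum_congr _ (fun _ _ => rfl)
    apply Finset.eq_univ_iff_forall.2
    intro v
    rcases hunion v with h | h
    · exact Finset.mem_union_left _ h
    · exact Finset.mem_union_right _ h
  -- classify vertices by degree
  set B₁ : Finset V := S₁.filter (fun v => G.degree v = m + 1) with hB₁
  set A₁ : Finset V := S₁.filter (fun v => ¬ G.degree v = m + 1) with hA₁
  set B₂ : Finset V := S₂.filter (fun v => G.degree v = m + 1) with hB₂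
  set A₂ : Finset V := S₂.filter (fun v => ¬ G.degree v = m + 1) with hA₂
  have hsplit₁ : B₁.card + A₁.card = m + 1 := by
    rw [hB₁, hA₁, Finset.card_filter_add_card_filter_not, hcard1]
  have hsplit₂ : B₂.card + A₂.card = m + 1 := by
    rw [hB₂, hA₂, Finset.card_filter_add_card_filter_not, hcard2]
  have hsum₁ : ∑ v ∈ S₁, G.degree v = (m + 1) * B₁.card + (m - 1) * A₁.card := by
    rw [← Finset.sum_filter_add_sum_filter_not S₁ (fun v => G.degree v = m + 1)]
    congr 1
    · rw [show (m + 1) * B₁.card = ∑ _v ∈ B₁, (m + 1) by rw [Finset.sum_const, smul_eq_mul, mul_comm]]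
      exact Finset.sum_congr rfl (fun v hv => (Finset.mem_filter.1 hv).2)
    · rw [show (m - 1) * A₁.card = ∑ _v ∈ A₁, (m - 1) by rw [Finset.sum_const, smul_eq_mul, mul_comm]]
      refine Finset.sum_congr rfl (fun v hv => ?_)
      rcases hdegv v with h | h
      · exact h
      · exact absurd h (Finset.mem_filter.1 hv).2
  have hsum₂ : ∑ v ∈ S₂, G.degree v = (m + 1) * B₂.card + (m - 1) * A₂.card := by
    rw [← Finset.sum_filter_add_sum_filter_not S₂ (fun v => G.degree v = m + 1)]
    congr 1
    · rw [show (m + 1) * B₂.card = ∑ _v ∈ B₂, (m + 1) by rw [Finset.sum_const, smul_eq_mul, mul_comm]]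
      exact Finset.sum_congr rfl (fun v hv => (Finset.mem_filter.1 hv).2)
    · rw [show (m - 1) * A₂.card = ∑ _v ∈ A₂, (m - 1) by rw [Finset.sum_const, smul_eq_mul, mul_comm]]
      refine Finset.sum_congr rfl (fun v hv => ?_)
      rcases hdegv v with h | h
      · exact h
      · exact absurd h (Finset.mem_filter.1 hv).2
  have e₁ : 2 * ∑ v ∈ S₁, G.degree v = m * (m - 1) + (m + 2) * (m + 1) := by
    rw [two_mul]
    nth_rewrite 2 [hsum12]
    exact htot
  have e₂ : 2 * ∑ v ∈ S₂, G.degree v = m * (m - 1) + (m + 2) * (m + 1) := by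
    rw [two_mul]
    nth_rewrite 1 [← hsum12]
    exact htot
  obtain ⟨k, hk⟩ : ∃ k, m = k + 1 := ⟨m - 1, by omega⟩
  have hm1 : m - 1 = k := by omega
  have key : ∀ b a : ℕ, 2 * ((m + 1) * b + (m - 1) * a) = m * (m - 1) + (m + 2) * (m + 1) →
      b + a = m + 1 → 2 * b = m + 2 := by
    intro b a he hs
    rw [hm1, hk] at he
    rw [hk] at hs ⊢
    have he' : 2 * (((k : ℤ) + 1 + 1) * b + k * a) = (k + 1) * k + (k + 1 + 2) * (k + 1 + 1) := by
      exact_mod_cast he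
    have hs' : (b : ℤ) + a = k + 1 + 1 := by exact_mod_cast hs
    have h4 : 4 * (b : ℤ) = 2 * k + 6 := by
      linear_combination he' - 2 * (k : ℤ) * hs'
    omega
  have keyB₁ : 2 * B₁.card = m + 2 := key _ _ (by rw [← hsum₁]; exact e₁) hsplit₁
  have keyB₂ : 2 * B₂.card = m + 2 := key _ _ (by rw [← hsum₂]; exact e₂) hsplit₂
  have hBA₁ : B₁.card = A₁.card + 1 := by omega
  have hA₂₁ : A₂.card = A₁.card := by omega
  have hBA₂ : B₂.card = A₁.card + 1 := by omega
  have hA₁2 : 2 ≤ A₁.card := by omega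
  -- build the Hamiltonian cycle list
  set LB : List V := B₁.toList with hLB
  set LA : List V := A₁.toList with hLA
  set LC : List V := A₂.toList with hLC
  set LD : List V := B₂.toList with hLD
  have lenB : LB.length = A₁.card + 1 := by rw [hLB, Finset.length_toList]; omega
  have lenA : LA.length = A₁.card := by rw [hLA, Finset.length_toList]
  have lenC : LC.length = A₁.card := by rw [hLC, Finset.length_toList]; omega
  have lenD : LD.length = A₁.card + 1 := by rw [hLD, Finset.length_toList]; omega
  have memLB : ∀ x, x ∈ LB ↔ (x ∈ S₁ ∧ G.degree x = m + 1) := by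
    intro x; rw [hLB, Finset.mem_toList, hB₁, Finset.mem_filter]
  have memLA : ∀ x, x ∈ LA ↔ (x ∈ S₁ ∧ ¬ G.degree x = m + 1) := by
    intro x; rw [hLA, Finset.mem_toList, hA₁, Finset.mem_filter]
  have memLC : ∀ x, x ∈ LC ↔ (x ∈ S₂ ∧ ¬ G.degree x = m + 1) := by
    intro x; rw [hLC, Finset.mem_toList, hA₂, Finset.mem_filter]
  have memLD : ∀ x, x ∈ LD ↔ (x ∈ S₂ ∧ G.degree x = m + 1) := by
    intro x; rw [hLD, Finset.mem_toList, hB₂, Finset.mem_filter]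
  have hadjBC : ∀ x ∈ LB, ∀ y ∈ LC, G.Adj x y ∧ G.Adj y x := by
    intro x hx y hy
    obtain ⟨hxS, hxd⟩ := (memLB x).1 hx
    obtain ⟨hyS, -⟩ := (memLC y).1 hy
    have h := hfull₁ x hxS hxd y hyS
    exact ⟨h, h.symm⟩
  have hadjDA : ∀ x ∈ LD, ∀ y ∈ LA, G.Adj x y ∧ G.Adj y x := by
    intro x hx y hy
    obtain ⟨hxS, hxd⟩ := (memLD x).1 hx
    obtain ⟨hyS, -⟩ := (memLA y).1 hy
    have h := hfull₂ x hxS hxd y hyS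
    exact ⟨h, h.symm⟩
  set L : List V := interleave LB LC ++ interleave LD LA with hL
  have hLperm : L.Perm (LB ++ LC ++ (LD ++ LA)) :=
    (interleave_perm LB LC).append (interleave_perm LD LA)
  -- nonemptiness
  obtain ⟨b0, lb, hLBc⟩ : ∃ b0 lb, LB = b0 :: lb := by
    cases hc : LB with
    | nil => rw [hc] at lenB; simp at lenB
    | cons b0 lb => exact ⟨b0, lb, rfl⟩
  obtain ⟨d0, ld, hLDc⟩ : ∃ d0 ld, LD = d0 :: ld := by
    cases hc : LD with
    | nil => rw [hc] at lenD; simp at lenD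
    | cons d0 ld => exact ⟨d0, ld, rfl⟩
  have hIntDA_ne : interleave LD LA ≠ [] := by
    have : (interleave LD LA).head? = some d0 := by rw [hLDc]; exact head?_interleave_cons _ _ _
    intro hnil; rw [hnil] at this; simp at this
  -- length
  have hlen : 3 ≤ L.length := by
    have := hLperm.length_eq
    simp only [List.length_append] at this
    omega
  -- nodup
  have hnodup : L.Nodup := by
    rw [hLperm.nodup_iff]
    have nB : LB.Nodup := Finset.nodup_toList _
    have nA : LA.Nodup := Finset.nodup_toList _
    have nC : LC.Nodup := Finset.nodup_toList _
    have nD : LD.Nodup := Finset.nodup_toList _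
    have crossS : ∀ x, x ∈ S₁ → x ∈ S₂ → False := fun x h1 h2 =>
      Set.disjoint_left.1 hdisj ((hmem₁ x).1 h1) ((hmem₂ x).1 h2)
    rw [List.nodup_append', List.nodup_append', List.nodup_append']
    refine ⟨⟨nB, nC, ?_⟩, ⟨nD, nA, ?_⟩, ?_⟩
    · intro x hx hy
      exact crossS x ((memLB x).1 hx).1 ((memLC x).1 hy).1
    · intro x hx hy
      exact crossS x ((memLA x).1 hy).1 ((memLD x).1 hx).1
    · intro x hx hy
      rcases List.mem_append.1 hx with hx | hx <;> rcases List.mem_append.1 hy with hy | hy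
      · exact crossS x ((memLB x).1 hx).1 ((memLD x).1 hy).1
      · exact ((memLA x).1 hy).2 ((memLB x).1 hx).2
      · exact ((memLC x).1 hx).2 ((memLD x).1 hy).2
      · exact crossS x ((memLA x).1 hy).1 ((memLC x).1 hx).1
  -- coverage
  have hcov : ∀ v, v ∈ L := by
    intro v
    rw [hLperm.mem_iff]
    simp only [List.mem_append]
    rcases hunion v with h | h <;> by_cases hd : G.degree v = m + 1
    · exact Or.inl (Or.inl ((memLB v).2 ⟨h, hd⟩))
    · exact Or.inr (Or.inr ((memLA v).2 ⟨h, hd⟩))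
    · exact Or.inr (Or.inl ((memLD v).2 ⟨h, hd⟩))
    · exact Or.inl (Or.inr ((memLC v).2 ⟨h, hd⟩))
  -- chain
  have hch1 : List.Chain' G.Adj (interleave LB LC) :=
    chain'_interleave LB LC (by omega) (by omega) hadjBC
  have hch2 : List.Chain' G.Adj (interleave LD LA) :=
    chain'_interleave LD LA (by omega) (by omega) hadjDA
  have hjunction : ∀ x ∈ (interleave LB LC).getLast?, ∀ y ∈ (interleave LD LA).head?, G.Adj x y := by
    intro x hx y hy
    rw [getLast?_interleave_succ LB LC (by omega)] at hx
    have hxB : x ∈ LB := by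
      obtain ⟨hne, hxe⟩ := List.mem_getLast?_eq_getLast hx
      rw [hxe]; exact List.getLast_mem hne
    have hyD : y ∈ LD := by
      rw [hLDc, head?_interleave_cons] at hy
      cases hy
      rw [hLDc]; exact List.mem_cons_self
    obtain ⟨hxS, hxd⟩ := (memLB x).1 hxB
    exact hfull₁ x hxS hxd y ((memLD y).1 hyD).1
  have hchain : L.Chain' G.Adj := List.isChain_append.2 ⟨hch1, hch2, hjunction⟩
  -- closure
  have hclose : ∀ x ∈ L.getLast?, ∀ y ∈ L.head?, G.Adj x y := by
    intro x hx y hy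
    rw [hL, List.getLast?_append_of_ne_nil _ hIntDA_ne,
      getLast?_interleave_succ LD LA (by omega)] at hx
    have hxD : x ∈ LD := by
      obtain ⟨hne, hxe⟩ := List.mem_getLast?_eq_getLast hx
      rw [hxe]; exact List.getLast_mem hne
    have hyB : y ∈ LB := by
      have hhd : L.head? = some b0 := by
        rw [hL, hLBc]
        cases LC <;> rfl
      rw [hhd] at hy
      cases hy
      rw [hLBc]; exact List.mem_cons_self
    obtain ⟨hxS, hxd⟩ := (memLD x).1 hxD
    exact hfull₂ x hxS hxd y ((memLB y).1 hyB).1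
  exact ham_of_cycle_list L hlen hnodup hcov hchain hclose
end

section
/- Let m and n be natural numbers with m ≥ 3 and n = m+1, and let G be a simple graph in the class G_{m,n} that is bipartite with bipartition (V_1, V_2) satisfying |V_1| = m and |V_2| = n. Then G is traceable, i.e., G contains a Hamiltonian path. -/
open SimpleGraph

lemma walk_of_fn {V : Type} (G : SimpleGraph V) :
    ∀ (N : ℕ) (f : ℕ → V), (∀ i < N, G.Adj (f i) (f (i+1))) →
    ∃ p : G.Walk (f 0) (f N), p.support = (List.range (N+1)).map f := by
  intro N
  induction N with
  | zero => intro f _; exact ⟨SimpleGraph.Walk.nil, by simp [List.range_succ]⟩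
  | succ N ih =>
    intro f hadj
    obtain ⟨p, hp⟩ := ih f (fun i hi => hadj i (Nat.lt_succ_of_lt hi))
    refine ⟨p.concat (hadj N (Nat.lt_succ_self N)), ?_⟩
    rw [SimpleGraph.Walk.support_concat, hp]
    rw [List.range_succ (n := N+1), List.map_append, List.range_succ (n := N)]
    simp

lemma mod_ne_of_lt_m {m a d : ℕ} (hd : 0 < d) (hdm : d < m) : (a + d) % m ≠ a % m := by
  intro h
  have : a ≤ a + d := Nat.le_add_right _ _
  have hdvd : m ∣ (a + d) - a := (Nat.modEq_iff_dvd' this).mp h.symm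
  rw [Nat.add_sub_cancel_left] at hdvd
  exact absurd (Nat.le_of_dvd hd hdvd) (not_le.mpr hdm)

lemma mod_eq_of_mem_Icc {m a b : ℕ} (ha1 : 1 ≤ a) (ham : a ≤ m) (hb1 : 1 ≤ b) (hbm : b ≤ m)
    (h : a % m = b % m) : a = b := by
  rcases eq_or_lt_of_le ham with h1 | h1 <;> rcases eq_or_lt_of_le hbm with h2 | h2
  · omega
  · rw [h1, Nat.mod_self, Nat.mod_eq_of_lt h2] at h; omega
  · rw [h2, Nat.mod_self, Nat.mod_eq_of_lt h1] at h; omega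
  · rwa [Nat.mod_eq_of_lt h1, Nat.mod_eq_of_lt h2] at h

theorem stmt_10 (m n : ℕ) (hm : 3 ≤ m) (hn : n = m + 1) {V : Type} [Fintype V] [DecidableEq V]
    (G : SimpleGraph V) [DecidableRel G.Adj] (hG : MemGmn m n G)
    (V₁ V₂ : Set V) (hbip : IsBipartition G V₁ V₂)
    (h1 : V₁.ncard = m) (h2 : V₂.ncard = n) :
    ∃ (u w : V) (p : G.Walk u w), p.IsHamiltonian := by
  classical
  subst hn
  obtain ⟨hcard, hdeg, -⟩ := hG
  obtain ⟨-, -, hdisj, hunion, hind1, hind2⟩ := hbip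
  have hm0 : 0 < m := by omega
  set S₁ := (Set.toFinite V₁).toFinset with hS₁def
  set S₂ := (Set.toFinite V₂).toFinset with hS₂def
  have hmem₁ : ∀ v, v ∈ S₁ ↔ v ∈ V₁ := fun v => Set.Finite.mem_toFinset _
  have hmem₂ : ∀ v, v ∈ S₂ ↔ v ∈ V₂ := fun v => Set.Finite.mem_toFinset _
  have hcardS₁ : S₁.card = m := by
    rw [← h1, Set.ncard_eq_toFinset_card V₁ (Set.toFinite V₁)]
  have hcardS₂ : S₂.card = m + 1 := by
    rw [← h2, Set.ncard_eq_toFinset_card V₂ (Set.toFinite V₂)]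
  have hdisjF : Disjoint S₁ S₂ := by
    rw [Finset.disjoint_left]
    intro v hv1 hv2
    exact Set.disjoint_left.mp hdisj ((hmem₁ v).1 hv1) ((hmem₂ v).1 hv2)
  have hcover : ∀ v : V, v ∈ S₁ ∨ v ∈ S₂ := by
    intro v
    have : v ∈ V₁ ∪ V₂ := hunion ▸ Set.mem_univ v
    rcases this with h | h
    · exact Or.inl ((hmem₁ v).2 h)
    · exact Or.inr ((hmem₂ v).2 h)
  -- degree dichotomy
  have hdeg_mem : ∀ v : V, G.degree v = m - 1 ∨ G.degree v = m := by
    intro v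
    have hv : G.degree v ∈ degreeMultiset G :=
      Multiset.mem_map_of_mem _ (Finset.mem_univ v)
    rw [hdeg] at hv
    rcases Multiset.mem_add.1 hv with h | h
    · exact Or.inl (Multiset.eq_of_mem_replicate h)
    · right
      have := Multiset.eq_of_mem_replicate h
      omega
  have hdegle : ∀ v : V, G.degree v ≤ m := by
    intro v; rcases hdeg_mem v with h | h <;> omega
  -- total degree sum
  have hsum : ∑ v, G.degree v = 2 * (m * m) := by
    have h := congrArg Multiset.sum hdeg
    have h2 : (degreeMultiset G).sum = ∑ v, G.degree v := rfl
    rw [h2] at h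
    rw [Multiset.sum_add, Multiset.sum_replicate, Multiset.sum_replicate] at h
    simp only [smul_eq_mul] at h
    rw [h]
    obtain ⟨m', rfl⟩ : ∃ m', m = m' + 1 := ⟨m - 1, by omega⟩
    simp only [Nat.add_sub_cancel]
    ring
  -- neighbors of S₁ lie in S₂ and vice versa
  have hN₁ : ∀ v ∈ S₁, G.neighborFinset v ⊆ S₂ := by
    intro v hv w hw
    rw [SimpleGraph.mem_neighborFinset] at hw
    rcases hcover w with h | h
    · exact absurd hw (hind1 v ((hmem₁ v).1 hv) w ((hmem₁ w).1 h))
    · exact h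
  have hN₂ : ∀ v ∈ S₂, G.neighborFinset v ⊆ S₁ := by
    intro v hv w hw
    rw [SimpleGraph.mem_neighborFinset] at hw
    rcases hcover w with h | h
    · exact h
    · exact absurd hw (hind2 v ((hmem₂ v).1 hv) w ((hmem₂ w).1 h))
  -- degree as restricted sums
  have hdegS₁ : ∀ v ∈ S₁, G.degree v = ∑ w ∈ S₂, if G.Adj v w then 1 else 0 := by
    intro v hv
    rw [← Finset.sum_filter, Finset.sum_const, smul_eq_mul, mul_one]
    congr 1
    rw [SimpleGraph.degree]
    congr 1
    ext w
    simp only [Finset.mem_filter, SimpleGraph.mem_neighborFinset]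
    constructor
    · intro h; exact ⟨hN₁ v hv (by rwa [SimpleGraph.mem_neighborFinset]), h⟩
    · exact fun h => h.2
  have hdegS₂ : ∀ w ∈ S₂, G.degree w = ∑ v ∈ S₁, if G.Adj v w then 1 else 0 := by
    intro w hw
    rw [← Finset.sum_filter, Finset.sum_const, smul_eq_mul, mul_one]
    congr 1
    rw [SimpleGraph.degree]
    congr 1
    ext v
    simp only [Finset.mem_filter, SimpleGraph.mem_neighborFinset]
    constructor
    · intro h; exact ⟨hN₂ w hw (by rwa [SimpleGraph.mem_neighborFinset]), h.symm⟩
    · exact fun h => h.2.symm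
  have hswap : ∑ v ∈ S₁, G.degree v = ∑ w ∈ S₂, G.degree w := by
    rw [Finset.sum_congr rfl hdegS₁, Finset.sum_congr rfl hdegS₂, Finset.sum_comm]
  have hsplit : ∑ v ∈ S₁, G.degree v + ∑ w ∈ S₂, G.degree w = 2 * (m * m) := by
    rw [← hsum, ← Finset.sum_union hdisjF]
    apply Finset.sum_congr _ (fun _ _ => rfl)
    apply Finset.eq_univ_iff_forall.mpr
    intro v
    rw [Finset.mem_union]
    exact hcover v
  have hsum₁ : ∑ v ∈ S₁, G.degree v = m * m := by omega
  have hsum₂ : ∑ w ∈ S₂, G.degree w = m * m := by omega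
  -- every vertex of S₁ has degree m
  have hdegv₁ : ∀ v ∈ S₁, G.degree v = m := by
    intro v hv
    by_contra hne
    have hlt : G.degree v < m := lt_of_le_of_ne (hdegle v) hne
    have : ∑ u ∈ S₁, G.degree u < ∑ _u ∈ S₁, m :=
      Finset.sum_lt_sum (fun u _ => hdegle u) ⟨v, hv, hlt⟩
    rw [Finset.sum_const, smul_eq_mul, hcardS₁, hsum₁] at this
    omega
  -- unique non-neighbor in S₂ of each vertex of S₁
  have hnb' : ∀ v ∈ S₁, ∃ w, S₂ \ G.neighborFinset v = {w} := by
    intro v hv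
    apply Finset.card_eq_one.mp
    rw [Finset.card_sdiff_of_subset (hN₁ v hv), hcardS₂]
    rw [← SimpleGraph.degree, hdegv₁ v hv]
    omega
  choose! nb hnb using hnb'
  have hnbS₂ : ∀ v ∈ S₁, nb v ∈ S₂ := by
    intro v hv
    have : nb v ∈ S₂ \ G.neighborFinset v := by rw [hnb v hv]; exact Finset.mem_singleton_self _
    exact (Finset.mem_sdiff.1 this).1
  have hadj_iff : ∀ v ∈ S₁, ∀ w ∈ S₂, (¬ G.Adj v w ↔ w = nb v) := by
    intro v hv w hw
    constructor
    · intro hna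
      have : w ∈ S₂ \ G.neighborFinset v := by
        rw [Finset.mem_sdiff, SimpleGraph.mem_neighborFinset]; exact ⟨hw, hna⟩
      rwa [hnb v hv, Finset.mem_singleton] at this
    · intro hwe
      have : nb v ∈ S₂ \ G.neighborFinset v := by rw [hnb v hv]; exact Finset.mem_singleton_self _
      rw [Finset.mem_sdiff, SimpleGraph.mem_neighborFinset] at this
      rw [hwe]; exact this.2
  -- nb is injective on S₁
  have hnbinj : ∀ v₁ ∈ S₁, ∀ v₂ ∈ S₁, nb v₁ = nb v₂ → v₁ = v₂ := by
    intro v₁ hv₁ v₂ hv₂ heq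
    by_contra hne
    set w := nb v₁ with hw
    have hwS₂ : w ∈ S₂ := hnbS₂ v₁ hv₁
    have hsub : {v₁, v₂} ⊆ S₁ \ G.neighborFinset w := by
      intro x hx
      rw [Finset.mem_insert, Finset.mem_singleton] at hx
      rw [Finset.mem_sdiff, SimpleGraph.mem_neighborFinset]
      rcases hx with rfl | rfl
      · refine ⟨hv₁, fun h => ?_⟩
        exact ((hadj_iff x hv₁ w hwS₂).mpr rfl) h.symm
      · refine ⟨hv₂, fun h => ?_⟩
        exact ((hadj_iff x hv₂ w hwS₂).mpr heq) h.symm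
    have hc2 : ({v₁, v₂} : Finset V).card = 2 := Finset.card_pair hne
    have hle2 : 2 ≤ (S₁ \ G.neighborFinset w).card := by
      rw [← hc2]; exact Finset.card_le_card hsub
    rw [Finset.card_sdiff_of_subset (hN₂ w hwS₂), ← SimpleGraph.degree, hcardS₁] at hle2
    have := hdeg_mem w
    omega
  -- the special vertex z
  have hzex : ∃ z ∈ S₂, ∀ v ∈ S₁, nb v ≠ z := by
    have himg : (S₁.image nb).card = m := by
      rw [Finset.card_image_of_injOn hnbinj, hcardS₁]
    have hsub : S₁.image nb ⊆ S₂ := by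
      intro w hw
      obtain ⟨v, hv, rfl⟩ := Finset.mem_image.1 hw
      exact hnbS₂ v hv
    have : (S₂ \ S₁.image nb).Nonempty := by
      apply Finset.card_pos.mp
      rw [Finset.card_sdiff_of_subset hsub, himg, hcardS₂]
      omega
    obtain ⟨z, hz⟩ := this
    rw [Finset.mem_sdiff] at hz
    refine ⟨z, hz.1, fun v hv hne => hz.2 ?_⟩
    rw [← hne]
    exact Finset.mem_image_of_mem nb hv
  obtain ⟨z, hzS₂, hznotnb⟩ := hzex
  -- enumeration of S₁
  have hcardtype : Fintype.card {x // x ∈ S₁} = m := by rw [Fintype.card_coe, hcardS₁]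
  set e := Fintype.equivFinOfCardEq hcardtype with hedef
  set A : ℕ → V := fun j => (e.symm ⟨j % m, Nat.mod_lt _ hm0⟩ : {x // x ∈ S₁}) with hAdef
  have hAS₁ : ∀ j, A j ∈ S₁ := fun j => (e.symm _).2
  have hAinj : ∀ j j', A j = A j' → j % m = j' % m := by
    intro j j' h
    have := e.symm.injective (Subtype.ext h)
    exact congrArg Fin.val this
  set B : ℕ → V := fun j => nb (A j) with hBdef
  have hBS₂ : ∀ j, B j ∈ S₂ := fun j => hnbS₂ _ (hAS₁ j)
  have hBinj : ∀ j j', B j = B j' → j % m = j' % m := by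
    intro j j' h
    exact hAinj j j' (hnbinj _ (hAS₁ j) _ (hAS₁ j') h)
  have hBz : ∀ j, B j ≠ z := fun j => hznotnb _ (hAS₁ j)
  have hAB : ∀ i j, i % m ≠ j % m → G.Adj (A i) (B j) := by
    intro i j hne
    by_contra hna
    have := (hadj_iff (A i) (hAS₁ i) (B j) (hBS₂ j)).mp hna
    exact hne ((hBinj j i this).symm)
  have hAz : ∀ i, G.Adj (A i) z := by
    intro i
    by_contra hna
    have := (hadj_iff (A i) (hAS₁ i) z hzS₂).mp hna
    exact hznotnb _ (hAS₁ i) this.symm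
  -- the path function
  set f : ℕ → V := fun k =>
    if k = 0 then z else if k % 2 = 1 then A (k / 2 + 1) else B (k / 2 - 1) with hfdef
  have hf0 : f 0 = z := rfl
  have hfodd : ∀ k, k % 2 = 1 → f k = A (k / 2 + 1) := by
    intro k hk
    have : k ≠ 0 := by omega
    simp [hfdef, this, hk]
  have hfeven : ∀ k, k ≠ 0 → k % 2 = 0 → f k = B (k / 2 - 1) := by
    intro k hk0 hk
    simp [hfdef, hk0, hk]
  -- adjacency along the path
  have hchain : ∀ i < 2 * m, G.Adj (f i) (f (i + 1)) := by
    intro i hi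
    rcases Nat.eq_zero_or_pos i with rfl | hipos
    · rw [hf0, hfodd 1 rfl]
      exact (hAz 1).symm
    rcases Nat.even_or_odd i with he | ho
    · -- i even, i ≥ 2
      have hi2 : i % 2 = 0 := Nat.even_iff.mp he
      have hi2' : 2 ≤ i := by omega
      rw [hfeven i (by omega) hi2, hfodd (i + 1) (by omega)]
      have h1 : (i + 1) / 2 = i / 2 := by omega
      rw [h1]
      set j := i / 2 - 1 with hj
      have hjlt : j + 2 ≤ m := by omega
      have : i / 2 + 1 = j + 2 := by omega
      rw [this]
      exact (hAB (j + 2) j (mod_ne_of_lt_m (by omega) (by omega))).symm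
    · -- i odd
      have hi2 : i % 2 = 1 := Nat.odd_iff.mp ho
      rw [hfodd i hi2, hfeven (i + 1) (by omega) (by omega)]
      have h1 : (i + 1) / 2 - 1 = i / 2 := by omega
      rw [h1]
      exact hAB (i / 2 + 1) (i / 2) (mod_ne_of_lt_m (by omega) (by omega))
  -- injectivity of f on range (2m+1)
  have hfinj : ∀ k < 2 * m + 1, ∀ k' < 2 * m + 1, f k = f k' → k = k' := by
    have hdS : ∀ x ∈ S₁, ∀ y ∈ S₂, x ≠ y := by
      intro x hx y hy h
      exact Finset.disjoint_left.mp hdisjF hx (h ▸ hy)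
    intro k hk k' hk' heq
    rcases Nat.eq_zero_or_pos k with rfl | hkpos <;> rcases Nat.eq_zero_or_pos k' with rfl | hk'pos
    · rfl
    · exfalso
      rw [hf0] at heq
      rcases Nat.even_or_odd k' with he | ho
      · rw [hfeven k' (by omega) (Nat.even_iff.mp he)] at heq
        exact hBz _ heq.symm
      · rw [hfodd k' (Nat.odd_iff.mp ho)] at heq
        exact hdS _ (hAS₁ _) z hzS₂ heq.symm
    · exfalso
      rw [hf0] at heq
      rcases Nat.even_or_odd k with he | ho
      · rw [hfeven k (by omega) (Nat.even_iff.mp he)] at heq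
        exact hBz _ heq
      · rw [hfodd k (Nat.odd_iff.mp ho)] at heq
        exact hdS _ (hAS₁ _) z hzS₂ heq
    · rcases Nat.even_or_odd k with he | ho <;> rcases Nat.even_or_odd k' with he' | ho'
      · rw [hfeven k (by omega) (Nat.even_iff.mp he),
            hfeven k' (by omega) (Nat.even_iff.mp he')] at heq
        have h := hBinj _ _ heq
        have hk2 : k % 2 = 0 := Nat.even_iff.mp he
        have hk'2 : k' % 2 = 0 := Nat.even_iff.mp he'
        have hlt1 : k / 2 - 1 < m := by omega
        have hlt2 : k' / 2 - 1 < m := by omega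
        rw [Nat.mod_eq_of_lt hlt1, Nat.mod_eq_of_lt hlt2] at h
        omega
      · exfalso
        rw [hfeven k (by omega) (Nat.even_iff.mp he), hfodd k' (Nat.odd_iff.mp ho')] at heq
        exact hdS _ (hAS₁ _) _ (hBS₂ _) heq.symm
      · exfalso
        rw [hfodd k (Nat.odd_iff.mp ho), hfeven k' (by omega) (Nat.even_iff.mp he')] at heq
        exact hdS _ (hAS₁ _) _ (hBS₂ _) heq
      · rw [hfodd k (Nat.odd_iff.mp ho), hfodd k' (Nat.odd_iff.mp ho')] at heq
        have h := hAinj _ _ heq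
        have hk2 : k % 2 = 1 := Nat.odd_iff.mp ho
        have hk'2 : k' % 2 = 1 := Nat.odd_iff.mp ho'
        have := mod_eq_of_mem_Icc (m := m) (by omega) (by omega) (by omega) (by omega) h
        omega
  -- surjectivity of f on range (2m+1)
  have hcardV : Fintype.card V = 2 * m + 1 := by omega
  have hfsurj : ∀ v : V, ∃ k < 2 * m + 1, f k = v := by
    have himg : ((Finset.range (2 * m + 1)).image f).card = 2 * m + 1 := by
      rw [Finset.card_image_of_injOn, Finset.card_range]
      intro x hx y hy h
      exact hfinj x (Finset.mem_range.mp hx) y (Finset.mem_range.mp hy) h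
    have huniv : (Finset.range (2 * m + 1)).image f = Finset.univ := by
      apply Finset.eq_univ_of_card
      rw [himg, hcardV]
    intro v
    have : v ∈ (Finset.range (2 * m + 1)).image f := huniv ▸ Finset.mem_univ v
    obtain ⟨k, hk, hfk⟩ := Finset.mem_image.1 this
    exact ⟨k, Finset.mem_range.mp hk, hfk⟩
  -- build the walk
  obtain ⟨p, hp⟩ := walk_of_fn G (2 * m) f hchain
  refine ⟨f 0, f (2 * m), p, fun v => ?_⟩
  rw [hp]
  apply List.count_eq_one_of_mem
  · apply List.Nodup.map_on
    · intro x hx y hy h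
      exact hfinj x (List.mem_range.mp hx) y (List.mem_range.mp hy) h
    · exact List.nodup_range
  · obtain ⟨k, hk, hfk⟩ := hfsurj v
    exact List.mem_map.mpr ⟨k, List.mem_range.mpr hk, hfk⟩
end

section
/- Let G be a simple graph on a finite vertex set V with |V| = n. Define the simple graph G' on the vertex set V × {1,2} by: (x,i) is adjacent to (y,i) in G' (for i = 1,2) if and only if x is adjacent to y in G, and (x,1) is adjacent to (y,2) in G' if and only if x ≠ y and x is not adjacent to y in G. Then every vertex of G' has degree n−1, and the independence numbers satisfy α(G) ≤ α(G') ≤ 2·α(G). -/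
open SimpleGraph

/-- The independence number of a finite simple graph: the maximum cardinality of a set of
pairwise non-adjacent vertices. -/
noncomputable def indepNum {V : Type} [Fintype V] (G : SimpleGraph V) : ℕ :=
  sSup {k | ∃ s : Finset V, (∀ u ∈ s, ∀ v ∈ s, ¬ G.Adj u v) ∧ s.card = k}

open Finset

lemma indep_bdd {V : Type} [Fintype V] (G : SimpleGraph V) :
    BddAbove {k | ∃ s : Finset V, (∀ u ∈ s, ∀ v ∈ s, ¬ G.Adj u v) ∧ s.card = k} := by
  refine ⟨Fintype.card V, fun k hk => ?_⟩
  obtain ⟨s, -, rfl⟩ := hk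
  exact s.card_le_univ

lemma le_indepNum {V : Type} [Fintype V] (G : SimpleGraph V) (s : Finset V)
    (hs : ∀ u ∈ s, ∀ v ∈ s, ¬ G.Adj u v) : s.card ≤ _root_.indepNum G :=
  le_csSup (indep_bdd G) ⟨s, hs, rfl⟩

lemma indepNum_mem {V : Type} [Fintype V] (G : SimpleGraph V) :
    ∃ s : Finset V, (∀ u ∈ s, ∀ v ∈ s, ¬ G.Adj u v) ∧ s.card = _root_.indepNum G := by
  have h0 : 0 ∈ {k | ∃ s : Finset V, (∀ u ∈ s, ∀ v ∈ s, ¬ G.Adj u v) ∧ s.card = k} :=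
    ⟨∅, fun u hu => absurd hu (by simp), by simp⟩
  exact Nat.sSup_mem ⟨0, h0⟩ (indep_bdd G)

theorem stmt_17 {V : Type} [Fintype V] [DecidableEq V] (n : ℕ) (hn : Fintype.card V = n)
    (G : SimpleGraph V)
    (G' : SimpleGraph (V ⊕ V)) [DecidableRel G'.Adj]
    (h1 : ∀ x y : V, G'.Adj (Sum.inl x) (Sum.inl y) ↔ G.Adj x y)
    (h2 : ∀ x y : V, G'.Adj (Sum.inr x) (Sum.inr y) ↔ G.Adj x y)
    (h3 : ∀ x y : V, G'.Adj (Sum.inl x) (Sum.inr y) ↔ (x ≠ y ∧ ¬ G.Adj x y)) :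
    (∀ w : V ⊕ V, G'.degree w = n - 1) ∧
    _root_.indepNum G ≤ _root_.indepNum G' ∧ _root_.indepNum G' ≤ 2 * _root_.indepNum G := by
  classical
  have hdegaux : ∀ x : V, (G.neighborFinset x).card + 1 ≤ n := by
    intro x
    have h := card_le_card (subset_univ (insert x (G.neighborFinset x)))
    rwa [card_insert_of_notMem (by simp), card_univ, hn] at h
  have hcompl : ∀ x : V,
      (univ \ insert x (G.neighborFinset x)).card = n - (G.neighborFinset x).card - 1 := by
    intro x
    rw [card_sdiff_of_subset (subset_univ _), card_insert_of_notMem (by simp), card_univ, hn]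
    omega
  have hcomplMem : ∀ x y : V,
      y ∈ univ \ insert x (G.neighborFinset x) ↔ (x ≠ y ∧ ¬ G.Adj x y) := by
    intro x y
    simp only [mem_sdiff, mem_univ, true_and, mem_insert, mem_neighborFinset]
    constructor
    · intro h; exact ⟨fun hh => h (Or.inl hh.symm), fun hh => h (Or.inr hh)⟩
    · rintro ⟨hne, hna⟩ (rfl | h)
      · exact hne rfl
      · exact hna h
  refine ⟨?_, ?_, ?_⟩
  · intro w
    have hdeg : G'.degree w
        = (G'.neighborFinset w).toLeft.card + (G'.neighborFinset w).toRight.card :=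
      (card_toLeft_add_card_toRight (u := G'.neighborFinset w)).symm
    rcases w with x | x
    · have hL : (G'.neighborFinset (Sum.inl x)).toLeft = G.neighborFinset x := by
        ext y; simp [h1]
      have hR : (G'.neighborFinset (Sum.inl x)).toRight
          = univ \ insert x (G.neighborFinset x) := by
        ext y
        rw [mem_toRight, mem_neighborFinset, h3, hcomplMem]
      rw [hdeg, hL, hR, hcompl x]
      have := hdegaux x
      omega
    · have hR : (G'.neighborFinset (Sum.inr x)).toRight = G.neighborFinset x := by
        ext y; simp [h2]
      have hL : (G'.neighborFinset (Sum.inr x)).toLeft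
          = univ \ insert x (G.neighborFinset x) := by
        ext y
        rw [mem_toLeft, mem_neighborFinset, adj_comm, h3, hcomplMem]
        exact ⟨fun h => ⟨h.1.symm, fun a => h.2 a.symm⟩,
          fun h => ⟨h.1.symm, fun a => h.2 a.symm⟩⟩
      rw [hdeg, hL, hR, hcompl x]
      have := hdegaux x
      omega
  · obtain ⟨s, hs, hcard⟩ := indepNum_mem G
    rw [← hcard, ← card_map ⟨Sum.inl, Sum.inl_injective⟩]
    refine le_indepNum G' _ fun u hu v hv => ?_
    simp only [mem_map, Function.Embedding.coeFn_mk] at hu hv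
    obtain ⟨a, ha, rfl⟩ := hu
    obtain ⟨b, hb, rfl⟩ := hv
    rw [h1]
    exact hs a ha b hb
  · obtain ⟨t, ht, hcard⟩ := indepNum_mem G'
    rw [← hcard, ← card_toLeft_add_card_toRight (u := t), two_mul]
    have hL : t.toLeft.card ≤ _root_.indepNum G := by
      refine le_indepNum G _ fun u hu v hv => ?_
      rw [mem_toLeft] at hu hv
      rw [← h1]
      exact ht _ hu _ hv
    have hR : t.toRight.card ≤ _root_.indepNum G := by
      refine le_indepNum G _ fun u hu v hv => ?_
      rw [mem_toRight] at hu hv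
      rw [← h2]
      exact ht _ hu _ hv
    omega
end

section
/- Let n be a natural number and let G be a simple graph on 2n vertices in which every vertex has degree n and which is not isomorphic to the complete bipartite graph K_{n,n}. Then G contains a triangle, i.e., three pairwise adjacent vertices. -/
open SimpleGraph

theorem stmt_19 (n : ℕ) {V : Type} [Fintype V] (G : SimpleGraph V) [DecidableRel G.Adj]
    (hcard : Fintype.card V = 2 * n)
    (hdeg : ∀ v : V, G.degree v = n)
    (hnotiso : IsEmpty (G ≃g completeBipartiteGraph (Fin n) (Fin n))) :
    ∃ a b c : V, G.Adj a b ∧ G.Adj a c ∧ G.Adj b c := by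
  classical
  by_contra hcon
  push_neg at hcon
  rcases Nat.eq_zero_or_pos n with hn | hn
  · apply hnotiso.false
    subst hn
    have hV : IsEmpty V := by
      rw [← Fintype.card_eq_zero_iff]
      simpa using hcard
    exact ⟨Equiv.equivOfIsEmpty V (Fin 0 ⊕ Fin 0), fun {a b} => isEmptyElim a⟩
  · have hpos : 0 < Fintype.card V := by omega
    obtain ⟨v⟩ := Fintype.card_pos_iff.mp hpos
    have hdv : 0 < G.degree v := by rw [hdeg]; exact hn
    obtain ⟨u, hu⟩ := (G.degree_pos_iff_exists_adj v).mp hdv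
    set A := G.neighborFinset u with hA
    set B := G.neighborFinset v with hB
    have hcardA : A.card = n := by rw [hA, card_neighborFinset_eq_degree, hdeg]
    have hcardB : B.card = n := by rw [hB, card_neighborFinset_eq_degree, hdeg]
    have hmemA : ∀ x, x ∈ A ↔ G.Adj u x := fun x => G.mem_neighborFinset u x
    have hmemB : ∀ x, x ∈ B ↔ G.Adj v x := fun x => G.mem_neighborFinset v x
    have hAB : Disjoint A B := by
      rw [Finset.disjoint_left]
      intro w hwA hwB
      exact hcon u w v ((hmemA w).mp hwA) hu.symm ((hmemB w).mp hwB).symm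
    have hunion : A ∪ B = Finset.univ := by
      apply Finset.eq_univ_of_card
      rw [Finset.card_union_of_disjoint hAB, hcardA, hcardB, hcard]
      ring
    have hBcomp : ∀ x, x ∈ B ↔ x ∉ A := by
      intro x
      constructor
      · intro hxB hxA
        exact Finset.disjoint_left.mp hAB hxA hxB
      · intro hxA
        have : x ∈ A ∪ B := hunion ▸ Finset.mem_univ x
        rcases Finset.mem_union.mp this with h | h
        · exact absurd h hxA
        · exact h
    have hindA : ∀ x ∈ A, ∀ y ∈ A, ¬ G.Adj x y := by
      intro x hx y hy hxy
      exact hcon u x y ((hmemA x).mp hx) ((hmemA y).mp hy) hxy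
    have hindB : ∀ x ∈ B, ∀ y ∈ B, ¬ G.Adj x y := by
      intro x hx y hy hxy
      exact hcon v x y ((hmemB x).mp hx) ((hmemB y).mp hy) hxy
    have hNA : ∀ x ∈ A, G.neighborFinset x = B := by
      intro x hx
      apply Finset.eq_of_subset_of_card_le
      · intro y hy
        have hy' : G.Adj x y := (G.mem_neighborFinset x y).mp hy
        have : y ∈ A ∪ B := hunion ▸ Finset.mem_univ y
        rcases Finset.mem_union.mp this with h | h
        · exact absurd hy' (hindA x hx y h)
        · exact h
      · simp [card_neighborFinset_eq_degree, hdeg, hcardB]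
    have hNB : ∀ x ∈ B, G.neighborFinset x = A := by
      intro x hx
      apply Finset.eq_of_subset_of_card_le
      · intro y hy
        have hy' : G.Adj x y := (G.mem_neighborFinset x y).mp hy
        have : y ∈ A ∪ B := hunion ▸ Finset.mem_univ y
        rcases Finset.mem_union.mp this with h | h
        · exact h
        · exact absurd hy' (hindB x hx y h)
      · simp [card_neighborFinset_eq_degree, hdeg, hcardA]
    have hadj : ∀ x y, G.Adj x y ↔ ((x ∈ A ∧ y ∉ A) ∨ (x ∉ A ∧ y ∈ A)) := by
      intro x y
      constructor
      · intro hxy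
        have hx : x ∈ A ∪ B := hunion ▸ Finset.mem_univ x
        rcases Finset.mem_union.mp hx with h | h
        · left
          refine ⟨h, ?_⟩
          have : y ∈ B := by
            rw [← hNA x h]; exact (G.mem_neighborFinset x y).mpr hxy
          exact (hBcomp y).mp this
        · right
          refine ⟨(hBcomp x).mp h, ?_⟩
          rw [← hNB x h]; exact (G.mem_neighborFinset x y).mpr hxy
      · rintro (⟨hxA, hyA⟩ | ⟨hxA, hyA⟩)
        · have hyB : y ∈ B := (hBcomp y).mpr hyA
          have : y ∈ G.neighborFinset x := (hNA x hxA) ▸ hyB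
          exact (G.mem_neighborFinset x y).mp this
        · have hxB : x ∈ B := (hBcomp x).mpr hxA
          have : y ∈ G.neighborFinset x := (hNB x hxB) ▸ hyA
          exact (G.mem_neighborFinset x y).mp this
    have hcA : Fintype.card {x // x ∈ A} = n := by
      rw [Fintype.card_coe]; exact hcardA
    have hcB : Fintype.card {x // ¬ x ∈ A} = n := by
      rw [Fintype.card_congr (Equiv.subtypeEquivRight (fun x => (hBcomp x).symm)),
        Fintype.card_coe]
      exact hcardB
    let eA : {x // x ∈ A} ≃ Fin n := Fintype.equivFinOfCardEq hcA
    let eB : {x // ¬ x ∈ A} ≃ Fin n := Fintype.equivFinOfCardEq hcB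
    let f : V ≃ (Fin n ⊕ Fin n) :=
      (Equiv.sumCompl (· ∈ A)).symm.trans (Equiv.sumCongr eA eB)
    have hfleft : ∀ a, (f a).isLeft = true ↔ a ∈ A := by
      intro a
      by_cases h : a ∈ A
      · simp [f, Equiv.sumCompl_symm_apply_of_pos (p := (· ∈ A)) h, h]
      · simp [f, Equiv.sumCompl_symm_apply_of_neg (p := (· ∈ A)) h, h]
    have hfright : ∀ a, (f a).isRight = true ↔ a ∉ A := by
      intro a
      by_cases h : a ∈ A
      · simp [f, Equiv.sumCompl_symm_apply_of_pos (p := (· ∈ A)) h, h]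
      · simp [f, Equiv.sumCompl_symm_apply_of_neg (p := (· ∈ A)) h, h]
    refine hnotiso.false ⟨f, ?_⟩
    intro a b
    rw [completeBipartiteGraph_adj, hadj a b]
    simp only [hfleft, hfright]
end
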